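/- arXiv:1709.08192 — 7 statements merged into one kernel-verified Lean document; each statement's English description precedes it below -/
import Mathlib

section
/- Let R be a discrete valuation ring with maximal ideal m, residue field k, and fraction field M. Let F : R² → R² be an R-linear endomorphism such that the subring R[F] of End_R(R²) generated by R and F is a free R-module of rank two. Let S = End_{R[F]}(R²) be the ring of R-linear endomorphisms of R² commuting with F. Then R² is a free S-module of rank one. -/
set_option synthInstance.maxHeartbeats 1000000
set_option maxHeartbeats 1000000

section Aux
open Matrix

variable {R : Type*} [CommRing R] [IsDomain R] [IsDiscreteValuationRing R]

private lemma aux_pair (x y : R) (h : ¬(x = 0 ∧ y = 0)) :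
    ∃ d : R, d ≠ 0 ∧ d ∣ x ∧ d ∣ y ∧ (d = x ∨ d = y) := by
  by_cases hx : x = 0
  · exact ⟨y, fun h0 => h ⟨hx, h0⟩, hx ▸ dvd_zero y, dvd_rfl, Or.inr rfl⟩
  · rcases ValuationRing.dvd_total x y with hxy | hyx
    · exact ⟨x, hx, dvd_rfl, hxy, Or.inl rfl⟩
    · by_cases hy : y = 0
      · exact ⟨x, hx, dvd_rfl, hy ▸ dvd_zero x, Or.inl rfl⟩
      · exact ⟨y, hy, hyx, dvd_rfl, Or.inr rfl⟩

private lemma aux_triple (x y z : R) (h : ¬(x = 0 ∧ y = 0 ∧ z = 0)) :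
    ∃ d g1 g2 g3 : R, d ≠ 0 ∧ x = d * g1 ∧ y = d * g2 ∧ z = d * g3 ∧
      (IsUnit g1 ∨ IsUnit g2 ∨ IsUnit g3) := by
  obtain ⟨d, hd0, hdx, hdy, hdz, hmem⟩ :
      ∃ d : R, d ≠ 0 ∧ d ∣ x ∧ d ∣ y ∧ d ∣ z ∧ (d = x ∨ d = y ∨ d = z) := by
    by_cases hxy : x = 0 ∧ y = 0
    · obtain ⟨hx0, hy0⟩ := hxy
      refine ⟨z, fun h0 => h ⟨hx0, hy0, h0⟩, ?_, ?_, dvd_rfl, Or.inr (Or.inr rfl)⟩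
      · rw [hx0]
        exact dvd_zero z
      · rw [hy0]
        exact dvd_zero z
    · obtain ⟨d', hd'0, hd'x, hd'y, hmem'⟩ := aux_pair x y hxy
      obtain ⟨d, hd0, hdd', hdz, hmem⟩ := aux_pair d' z (fun h0 => hd'0 h0.1)
      refine ⟨d, hd0, hdd'.trans hd'x, hdd'.trans hd'y, hdz, ?_⟩
      rcases hmem with rfl | rfl
      · rcases hmem' with rfl | rfl
        · exact Or.inl rfl
        · exact Or.inr (Or.inl rfl)
      · exact Or.inr (Or.inr rfl)
  obtain ⟨g1, hg1⟩ := hdx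
  obtain ⟨g2, hg2⟩ := hdy
  obtain ⟨g3, hg3⟩ := hdz
  refine ⟨d, g1, g2, g3, hd0, hg1, hg2, hg3, ?_⟩
  rcases hmem with h1 | h2 | h3
  · left
    have : d * 1 = d * g1 := by rw [mul_one, ← hg1, h1]
    rw [← mul_left_cancel₀ hd0 this]; exact isUnit_one
  · right; left
    have : d * 1 = d * g2 := by rw [mul_one, ← hg2, h2]
    rw [← mul_left_cancel₀ hd0 this]; exact isUnit_one
  · right; right
    have : d * 1 = d * g3 := by rw [mul_one, ← hg3, h3]
    rw [← mul_left_cancel₀ hd0 this]; exact isUnit_one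

private lemma aux_span (G' : Module.End R (Fin 2 → R)) (r : Fin 2 → R)
    (hdet : IsUnit (r 0 * G' r 1 - G' r 0 * r 1)) :
    ∀ x : Fin 2 → R, ∃ a b : R, x = a • r + b • G' r := by
  intro x
  set P : Matrix (Fin 2) (Fin 2) R := !![r 0, G' r 0; r 1, G' r 1] with hPdef
  have hP : IsUnit P.det := by
    rw [Matrix.det_fin_two]
    simpa [hPdef] using hdet
  refine ⟨(P⁻¹ *ᵥ x) 0, (P⁻¹ *ᵥ x) 1, ?_⟩
  have h1 : P *ᵥ (P⁻¹ *ᵥ x) = x := by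
    rw [Matrix.mulVec_mulVec, Matrix.mul_nonsing_inv _ hP, Matrix.one_mulVec]
  conv_lhs => rw [← h1]
  funext i
  fin_cases i <;>
    simp [Matrix.mulVec, dotProduct, Fin.sum_univ_two, hPdef, mul_comm]

end Aux

/-- Let `R` be a DVR and `F` an `R`-linear endomorphism of `R²` such that the subalgebra
`R[F]` of `End_R(R²)` generated by `F` is free of rank two over `R`.  Then `R²` is free of
rank one over the commutant `S = End_{R[F]}(R²)` of `F`:  there is an element `r ∈ R²` such
that `s ↦ s(r)` is a bijection from `S` onto `R²`. -/
theorem integral_frobenius_key_lemma_dvr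
    (R : Type*) [CommRing R] [IsDomain R] [IsDiscreteValuationRing R]
    (F : Module.End R (Fin 2 → R))
    (hfree : Nonempty (Module.Basis (Fin 2) R (Algebra.adjoin R ({F} : Set (Module.End R (Fin 2 → R)))))) :
    ∃ r : Fin 2 → R,
      Function.Bijective
        (fun s : Subalgebra.centralizer R ({F} : Set (Module.End R (Fin 2 → R))) =>
          (s : Module.End R (Fin 2 → R)) r) := by
  classical
  set A := LinearMap.toMatrix' F with hA
  set c := A 0 0 with hc
  -- `F` is not a scalar
  have hns : ¬ (A 0 1 = 0 ∧ A 1 0 = 0 ∧ A 1 1 - c = 0) := by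
    rintro ⟨h1, h2, h3⟩
    have hAe : A = c • (1 : Matrix (Fin 2) (Fin 2) R) := by
      ext i j
      fin_cases i <;> fin_cases j <;>
        simp [Matrix.one_apply, h1, h2, sub_eq_zero.mp h3, hc]
    have hF : F = (algebraMap R (Module.End R (Fin 2 → R))) c := by
      have h4 := congrArg Matrix.toLin' hAe
      rw [hA, Matrix.toLin'_toMatrix'] at h4
      rw [h4]
      simp only [map_smul, Matrix.toLin'_one, Algebra.algebraMap_eq_smul_one,
        ← Module.End.one_eq_id]
    have hbot : Algebra.adjoin R ({F} : Set (Module.End R (Fin 2 → R))) = ⊥ := by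
      refine le_antisymm (Algebra.adjoin_le ?_) bot_le
      rw [Set.singleton_subset_iff, hF]
      exact Algebra.mem_bot.mpr ⟨c, rfl⟩
    obtain ⟨b⟩ := hfree
    obtain ⟨x0, hx0⟩ := Algebra.mem_bot.mp (hbot.le (b 0).2)
    obtain ⟨x1, hx1⟩ := Algebra.mem_bot.mp (hbot.le (b 1).2)
    have hz : x1 • b 0 - x0 • b 1 = 0 := by
      apply Subtype.ext
      push_cast
      rw [← hx0, ← hx1]
      rw [Algebra.algebraMap_eq_smul_one, Algebra.algebraMap_eq_smul_one,
        smul_smul, smul_smul, mul_comm, sub_self]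
    have hli := (Fintype.linearIndependent_iff (v := ⇑b)).mp b.linearIndependent ![x1, -x0] ?_
    · have hb0 : b 0 = 0 := by
        apply Subtype.ext
        have : x1 = 0 := by simpa using hli 0
        have h5 : x0 = 0 := by
          have := hli 1
          simpa using this
        rw [← hx0, h5, map_zero]; rfl
      exact b.ne_zero 0 hb0
    · rw [Fin.sum_univ_two]
      simp only [Matrix.cons_val_zero, Matrix.cons_val_one, Matrix.head_cons, neg_smul]
      rw [← sub_eq_add_neg]
      exact hz
  obtain ⟨d, g1, g2, g3, hd0, he1, he2, he3, hunit⟩ :=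
    aux_triple (A 0 1) (A 1 0) (A 1 1 - c) hns
  set G : Matrix (Fin 2) (Fin 2) R := !![0, g1; g2, g3] with hG
  set G' : Module.End R (Fin 2 → R) := Matrix.toLin' G with hG'
  -- decomposition of F
  have hFd : F = c • (1 : Module.End R (Fin 2 → R)) + d • G' := by
    have hAe : A = c • (1 : Matrix (Fin 2) (Fin 2) R) + d • G := by
      ext i j
      fin_cases i <;> fin_cases j
      · simp [Matrix.one_apply, hG, hc]
      · simp [Matrix.one_apply, hG, he1]
      · simp [Matrix.one_apply, hG, he2]
      · simp [Matrix.one_apply, hG]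
        rw [← he3]
        ring
    have h4 := congrArg Matrix.toLin' hAe
    rw [hA, Matrix.toLin'_toMatrix'] at h4
    rw [h4]
    simp only [map_add, map_smul, Matrix.toLin'_one, ← Module.End.one_eq_id, hG']
  -- G' commutes with F
  have hG'c : G' ∈ Subalgebra.centralizer R ({F} : Set (Module.End R (Fin 2 → R))) := by
    rw [Subalgebra.mem_centralizer_iff]
    rintro g hg
    rw [Set.mem_singleton_iff] at hg
    subst hg
    rw [hFd]
    simp [add_mul, mul_add, smul_mul_assoc, mul_smul_comm]
  -- every element of the centralizer commutes with G'
  have hcomm : ∀ s ∈ Subalgebra.centralizer R ({F} : Set (Module.End R (Fin 2 → R))),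
      G' * s = s * G' := by
    intro s hs
    have h5 := (Subalgebra.mem_centralizer_iff R).mp hs F (Set.mem_singleton F)
    rw [hFd, add_mul, mul_add, smul_mul_assoc, smul_mul_assoc, mul_smul_comm,
      mul_smul_comm, one_mul, mul_one] at h5
    have h6 : d • (G' * s) = d • (s * G') := by
      exact add_left_cancel h5
    exact smul_right_injective _ hd0 h6
  -- find the cyclic vector r
  obtain ⟨r, hspan⟩ : ∃ r : Fin 2 → R, ∀ x : Fin 2 → R, ∃ a b : R, x = a • r + b • G' r := by
    have hGr : ∀ v : Fin 2 → R, G' v = ![g1 * v 1, g2 * v 0 + g3 * v 1] := by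
      intro v
      rw [hG', Matrix.toLin'_apply]
      funext i
      fin_cases i <;>
        simp [hG, Matrix.mulVec, dotProduct, Fin.sum_univ_two]
    by_cases hu2 : IsUnit g2
    · refine ⟨![1, 0], aux_span G' _ ?_⟩
      rw [hGr]
      simpa using hu2
    · by_cases hu1 : IsUnit g1
      · refine ⟨![0, 1], aux_span G' _ ?_⟩
        rw [hGr]
        simpa using hu1.neg
      · have hu3 : IsUnit g3 := by
          rcases hunit with h | h | h
          · exact absurd h hu1
          · exact absurd h hu2
          · exact h
        refine ⟨![1, 1], aux_span G' _ ?_⟩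
        rw [hGr]
        simp only [Matrix.cons_val_zero, Matrix.cons_val_one, Matrix.head_cons]
        -- goal : IsUnit (1 * (g2 * 1 + g3 * 1) - g1 * 1 * 1)  (roughly)
        have : (1 : R) * (g2 * 1 + g3 * 1) - g1 * 1 = g2 + g3 - g1 := by ring
        by_contra hn
        have hmem : ∀ t : R, ¬ IsUnit t → t ∈ nonunits R := fun t ht => ht
        have h7 : g3 ∈ nonunits R := by
          have h8 : g3 = (1 * (g2 * 1 + g3 * 1) - g1 * 1 * 1) + (-g2) + g1 := by ring
          rw [h8]
          exact IsLocalRing.nonunits_add (IsLocalRing.nonunits_add (hmem _ hn) (by simpa using hmem _ hu2)) (hmem _ hu1)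
        exact h7 hu3
  refine ⟨r, ?_, ?_⟩
  · -- injectivity
    rintro ⟨s1, hs1⟩ ⟨s2, hs2⟩ h
    simp only at h
    apply Subtype.ext
    apply LinearMap.ext
    intro x
    obtain ⟨a, b, rfl⟩ := hspan x
    have e1 : s1 (G' r) = G' (s1 r) := by
      have := congrArg (fun f : Module.End R (Fin 2 → R) => f r) (hcomm s1 hs1)
      simpa [Module.End.mul_apply] using this.symm
    have e2 : s2 (G' r) = G' (s2 r) := by
      have := congrArg (fun f : Module.End R (Fin 2 → R) => f r) (hcomm s2 hs2)
      simpa [Module.End.mul_apply] using this.symm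
    simp only [map_add, map_smul, e1, e2, h]
  · -- surjectivity
    intro x
    obtain ⟨a, b, hx⟩ := hspan x
    refine ⟨⟨a • 1 + b • G', ?_⟩, ?_⟩
    · exact add_mem (Subalgebra.smul_mem _ (one_mem _) a) (Subalgebra.smul_mem _ hG'c b)
    · simp only [LinearMap.add_apply, LinearMap.smul_apply, Module.End.one_apply]
      exact hx.symm
end

section
/- Let O be a Dedekind domain with fraction field E, let L be a quadratic étale E-algebra (either a quadratic field extension of E or isomorphic to E × E), and let π ∈ L be integral over O with π ∉ E. For any O-order S ⊆ L containing O[π], letting b_S ⊆ O be the annihilator of the O-module S/O[π], one has O[π] = O + b_S·S. -/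
open Polynomial

/-- Let `O` be a Dedekind domain with fraction field `E`, `L` a quadratic étale
`E`-algebra, and `π ∈ L` integral over `O` with `π ∉ E`.  For any `O`-order
`S ⊆ L` containing `O[π]` (a subring containing `O`, finitely generated as an
`O`-module, spanning `L` over `E`), letting `b_S ⊆ O` be the annihilator (conductor)
of `S/O[π]`, one has `O[π] = O + b_S·S`. -/
theorem order_eq_base_sup_conductor_smul {u : Type} (O E L : Type u)
    [CommRing O] [IsDomain O] [IsDedekindDomain O]
    [Field E] [Algebra O E] [IsFractionRing O E]
    [CommRing L] [Algebra E L] [Algebra O L] [IsScalarTower O E L]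
    [Algebra.Etale E L] (hdim : Module.finrank E L = 2)
    (π : L) (hint : IsIntegral O π) (hπ : π ∉ (algebraMap E L).range)
    (S : Subalgebra O L) (hS : Algebra.adjoin O ({π} : Set L) ≤ S)
    (hfg : (Subalgebra.toSubmodule S).FG)
    (hspan : Submodule.span E (S : Set L) = ⊤) :
    Subalgebra.toSubmodule (Algebra.adjoin O ({π} : Set L)) =
      (1 : Submodule O L) ⊔
        ((Subalgebra.toSubmodule (Algebra.adjoin O ({π} : Set L))).colon
            (Subalgebra.toSubmodule S)) • (Subalgebra.toSubmodule S) := by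
  classical
  have hntL : Nontrivial L := Module.nontrivial_of_finrank_pos (R := E)
    (by rw [hdim]; norm_num)
  have hfd : FiniteDimensional E L := Module.finite_of_finrank_pos (R := E)
    (by rw [hdim]; norm_num)
  set ι : E →+* L := algebraMap E L with hι
  have hιinj : Function.Injective ι := ι.injective
  have hOEinj : Function.Injective (algebraMap O E) := IsFractionRing.injective O E
  -- linear independence of 1, π over E
  have li : LinearIndependent E ![(1 : L), π] := by
    rw [linearIndependent_fin2]
    constructor
    · simp only [Matrix.cons_val_one, Matrix.head_cons]
      intro h
      exact hπ ⟨0, by simp at h; simp [h]⟩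
    · intro a ha
      simp only [Matrix.cons_val_one, Matrix.head_cons, Matrix.cons_val_zero] at ha
      have ha0 : a ≠ 0 := by rintro rfl; rw [zero_smul] at ha; exact one_ne_zero ha.symm
      apply hπ
      refine ⟨a⁻¹, ?_⟩
      have : a⁻¹ • (a • π) = a⁻¹ • (1 : L) := by rw [ha]
      rw [smul_smul, inv_mul_cancel₀ ha0, one_smul] at this
      rw [this, Algebra.smul_def, mul_one]
  let B : Module.Basis (Fin 2) E L := basisOfLinearIndependentOfCardEqFinrank li (by simp [hdim])
  have hB : ⇑B = ![(1 : L), π] := coe_basisOfLinearIndependentOfCardEqFinrank li _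
  have hB0 : B 0 = 1 := by rw [hB]; rfl
  have hB1 : B 1 = π := by rw [hB]; rfl
  set xL : L →ₗ[E] E := B.coord 0 with hxL
  set yL : L →ₗ[E] E := B.coord 1 with hyL
  have hrepr : ∀ z : L, z = ι (xL z) + ι (yL z) * π := by
    intro z
    have h := B.sum_repr z
    rw [Fin.sum_univ_two, hB0, hB1] at h
    rw [hxL, hyL]
    simp only [Module.Basis.coord_apply]
    conv_lhs => rw [← h]
    rw [Algebra.smul_def, Algebra.smul_def, mul_one]
  have huniq : ∀ c₀ c₁ : E, ι c₀ + ι c₁ * π = 0 → c₀ = 0 ∧ c₁ = 0 := by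
    intro c₀ c₁ h
    by_cases hc₁ : c₁ = 0
    · subst hc₁
      simp only [map_zero, zero_mul, add_zero] at h
      exact ⟨hιinj (by simpa using h), rfl⟩
    · exfalso
      apply hπ
      refine ⟨-(c₁⁻¹ * c₀), ?_⟩
      have : ι c₁ * π = -ι c₀ := by linear_combination h
      have h2 : π = ι c₁⁻¹ * (ι c₁ * π) := by
        rw [← mul_assoc, ← map_mul, inv_mul_cancel₀ hc₁, map_one, one_mul]
      rw [this] at h2
      rw [h2, map_neg, map_mul]
      ring
  have hcoord : ∀ (z : L) (c₀ c₁ : E), z = ι c₀ + ι c₁ * π → xL z = c₀ ∧ yL z = c₁ := by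
    intro z c₀ c₁ hz
    have h0 : ι (xL z - c₀) + ι (yL z - c₁) * π = 0 := by
      rw [map_sub, map_sub, sub_mul]
      have := hrepr z
      rw [hz] at this ⊢
      linear_combination -this
    obtain ⟨h1, h2⟩ := huniq _ _ h0
    exact ⟨sub_eq_zero.mp h1, sub_eq_zero.mp h2⟩
  -- π² = c + d π
  set c : E := xL (π ^ 2) with hc
  set d : E := yL (π ^ 2) with hd
  have hππ : π ^ 2 = ι c + ι d * π := hrepr (π ^ 2)
  -- the quadratic polynomial over E
  set g : E[X] := X ^ 2 - (C d * X + C c) with hg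
  have hgm : g.Monic := monic_X_pow_sub (lt_of_le_of_lt degree_linear_le (by norm_num))
  have hgdeg : g.degree = 2 := by
    rw [hg]
    rw [degree_sub_eq_left_of_degree_lt]
    · exact degree_X_pow 2
    · rw [degree_X_pow]
      exact lt_of_le_of_lt degree_linear_le (by norm_num)
  have haevalg : aeval π g = 0 := by
    rw [hg]
    simp only [map_sub, map_add, map_mul, map_pow, aeval_X, aeval_C]
    rw [hππ]
    ring
  -- divide the integral equation by g
  obtain ⟨f, hfm, hf0⟩ := hint
  have haevalf : aeval π (f.map (algebraMap O E)) = 0 := by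
    rw [aeval_map_algebraMap]
    rw [aeval_def]
    exact hf0
  set r : E[X] := f.map (algebraMap O E) %ₘ g with hr
  have haevalr : aeval π r = 0 := by
    have h := modByMonic_add_div (f.map (algebraMap O E)) g
    have := congrArg (aeval π) h
    rw [map_add, map_mul, haevalg, zero_mul, add_zero, haevalf] at this
    exact this
  have hrdeg : r.degree ≤ 1 := by
    have h2 : r.degree < 2 := hgdeg ▸ degree_modByMonic_lt _ hgm
    by_cases h0 : r = 0
    · simp [h0]
    · rw [degree_eq_natDegree h0] at h2 ⊢
      exact_mod_cast Nat.lt_succ_iff.mp (by exact_mod_cast h2)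
  have hr0 : r = 0 := by
    have hrX := eq_X_add_C_of_degree_le_one hrdeg
    have : ι (r.coeff 0) + ι (r.coeff 1) * π = 0 := by
      have := haevalr
      rw [hrX] at this
      simp only [map_add, map_mul, aeval_X, aeval_C] at this
      linear_combination this
    obtain ⟨h1, h2⟩ := huniq _ _ this
    rw [hrX, h1, h2]
    simp
  have hdvd : g ∣ f.map (algebraMap O E) := (modByMonic_eq_zero_iff_dvd hgm).mp hr0
  obtain ⟨g', hg'⟩ := IsIntegrallyClosed.eq_map_mul_C_of_dvd (R := O) E hfm hdvd
  rw [hgm.leadingCoeff, map_one, mul_one] at hg'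
  -- coefficients of g are in O
  have hcdE : ∀ k, g.coeff k ∈ (algebraMap O E).range := by
    intro k
    exact ⟨g'.coeff k, by rw [← hg', coeff_map]⟩
  have hcoeff0 : g.coeff 0 = -c := by simp [hg, coeff_X_pow]
  have hcoeff1 : g.coeff 1 = -d := by simp [hg, coeff_X_pow]
  have hdmem : d ∈ (algebraMap O E).range := by
    have := hcdE 1
    rw [hcoeff1] at this
    simpa using (RingHom.range (algebraMap O E)).neg_mem this
  -- O[π] = span O {1, π}
  have hg'm : g'.Monic := monic_of_injective hOEinj (by rw [hg']; exact hgm)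
  have hg'deg : g'.natDegree = 2 := by
    have := natDegree_map_eq_of_injective hOEinj g'
    rw [hg'] at this
    rw [← this]
    exact natDegree_eq_of_degree_eq_some hgdeg
  have haevalg' : aeval π g' = 0 := by
    rw [← aeval_map_algebraMap E, hg', haevalg]
  have hAspan : Subalgebra.toSubmodule (Algebra.adjoin O ({π} : Set L)) =
      Submodule.span O {1, π} := by
    rw [← Submodule.span_range_natDegree_eq_adjoin hg'm haevalg', hg'deg]
    congr 1
    have : Finset.range 2 = {0, 1} := rfl
    rw [this]
    simp [Finset.image_insert]
  set A' : Submodule O L := Subalgebra.toSubmodule (Algebra.adjoin O ({π} : Set L)) with hA'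
  set S' : Submodule O L := Subalgebra.toSubmodule S with hS'
  set b : Ideal O := A'.colon S' with hb
  have hπS : π ∈ S' := hS (Algebra.subset_adjoin (Set.mem_singleton π))
  -- membership criterion for the conductor
  have hbmem : ∀ a₀ : O, (∀ s ∈ S', algebraMap O E a₀ * yL s ∈ (algebraMap O E).range) →
      a₀ ∈ b := by
    intro a₀ ha
    rw [hb, Submodule.mem_colon]
    intro s hs
    have hπs : π * s ∈ S' := S.mul_mem hπS hs
    -- y (π s) = x s + d y s
    have hπscoord : yL (π * s) = xL s + yL s * d := by
      have hcomp : π * s = ι (yL s * c) + ι (xL s + yL s * d) * π := by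
        conv_lhs => rw [hrepr s]
        rw [mul_add, mul_comm π (ι (yL s) * π), mul_assoc, ← pow_two, hππ]
        rw [map_mul, map_add, map_mul]
        ring
      exact (hcoord _ _ _ hcomp).2
    -- coordinates of a₀ • s
    have hxmem : algebraMap O E a₀ * xL s ∈ (algebraMap O E).range := by
      have h1 : algebraMap O E a₀ * xL s =
          algebraMap O E a₀ * yL (π * s) - d * (algebraMap O E a₀ * yL s) := by
        rw [hπscoord]; ring
      rw [h1]
      exact sub_mem (ha _ hπs) (mul_mem hdmem (ha _ hs))
    obtain ⟨c₁, hc₁⟩ := hxmem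
    obtain ⟨c₂, hc₂⟩ := ha s hs
    have hsval : a₀ • s = c₁ • (1 : L) + c₂ • π := by
      have h1 : a₀ • s = ι (algebraMap O E a₀) * s := by
        rw [Algebra.smul_def, ← IsScalarTower.algebraMap_apply]
      rw [h1]
      conv_lhs => rw [hrepr s]
      rw [mul_add, ← mul_assoc, ← map_mul, ← map_mul, ← hc₁, ← hc₂]
      rw [Algebra.smul_def, Algebra.smul_def, mul_one,
        IsScalarTower.algebraMap_apply O E L c₁, IsScalarTower.algebraMap_apply O E L c₂, hι]
    rw [hAspan]
    rw [Submodule.mem_span_pair]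
    exact ⟨c₁, c₂, hsval.symm⟩
  -- fractional ideal argument
  set y' : L →ₗ[O] E := yL.restrictScalars O with hy'
  set I : Submodule O E := S'.map y' with hI
  have hIfg : I.FG := hfg.map y'
  have hyπ : yL π = 1 := (hcoord π 0 1 (by simp)).2
  have hy1 : yL 1 = 0 := (hcoord 1 1 0 (by simp)).2
  have h1I : (1 : E) ∈ I := ⟨π, hπS, by simpa [hy'] using hyπ⟩
  set J : FractionalIdeal (nonZeroDivisors O) E :=
    ⟨I, FractionalIdeal.isFractional_of_fg hIfg⟩ with hJ
  have hJI : (J : Submodule O E) = I := rfl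
  have hJ0 : J ≠ 0 := by
    intro h
    have : (1 : E) ∈ (J : Submodule O E) := h1I
    rw [h] at this
    simp only [FractionalIdeal.coe_zero, Submodule.mem_bot] at this
    exact one_ne_zero this
  have hmul : J * J⁻¹ = 1 := mul_inv_cancel₀ hJ0
  have h1mem : (1 : E) ∈ (J : Submodule O E) * (↑(J⁻¹) : Submodule O E) := by
    rw [← FractionalIdeal.coe_mul, hmul]
    exact FractionalIdeal.one_mem_one _
  have hle : (J : Submodule O E) * (↑(J⁻¹) : Submodule O E) ≤ b • I := by
    rw [Submodule.mul_le]
    intro m hm n hn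
    have hn' : ∀ v ∈ J, n * v ∈ (1 : FractionalIdeal (nonZeroDivisors O) E) :=
      (FractionalIdeal.mem_inv_iff hJ0).mp hn
    obtain ⟨a₀, ha₀⟩ := FractionalIdeal.mem_one_iff (nonZeroDivisors O) |>.mp (by
      simpa using hn' 1 (show (1 : E) ∈ I from h1I))
    have ha₀b : a₀ ∈ b := by
      apply hbmem
      intro s hs
      have hys : yL s ∈ J := show yL s ∈ I from ⟨s, hs, rfl⟩
      have := hn' _ hys
      rw [FractionalIdeal.mem_one_iff] at this
      obtain ⟨w, hw⟩ := this
      exact ⟨w, by rw [hw, ha₀]⟩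
    have : m * n = a₀ • m := by
      rw [Algebra.smul_def, ha₀, mul_comm]
    rw [this]
    exact Submodule.smul_mem_smul ha₀b hm
  have h1bI : (1 : E) ∈ b • I := hle h1mem
  have hmap : b • I = (b • S').map y' := (Submodule.map_smul'' b S' y').symm
  rw [hmap] at h1bI
  obtain ⟨w, hw, hw1⟩ := h1bI
  -- final assembly
  apply le_antisymm
  · -- LHS ≤ RHS
    rw [hAspan]
    rw [Submodule.span_le]
    rintro z hz
    simp only [Set.mem_insert_iff, Set.mem_singleton_iff] at hz
    rcases hz with rfl | hzπ
    · exact Submodule.mem_sup_left (Submodule.one_le.mp le_rfl)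
    · -- π ∈ RHS
      rw [hzπ]
      have hbSle : b • S' ≤ A' := Submodule.smul_le.mpr
        (fun a ha s hs => Submodule.mem_colon.mp ha s hs)
      have hwA : w ∈ A' := hbSle hw
      rw [hAspan, Submodule.mem_span_pair] at hwA
      obtain ⟨c₁, c₂, hw2⟩ := hwA
      have hyw : algebraMap O E c₂ = 1 := by
        have : y' w = algebraMap O E c₂ := by
          rw [← hw2]
          simp only [hy', map_add, LinearMap.map_smul, LinearMap.coe_restrictScalars]
          rw [hy1, hyπ]
          simp [Algebra.smul_def]
        rw [← this, hw1]
      have hc₂ : c₂ = 1 := hOEinj (by rw [hyw, map_one])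
      have hπw : π = w - c₁ • (1 : L) := by
        rw [← hw2, hc₂, one_smul, add_sub_cancel_left]
      rw [hπw]
      apply Submodule.sub_mem
      · exact Submodule.mem_sup_right hw
      · exact Submodule.mem_sup_left (Submodule.smul_mem _ _ (Submodule.one_le.mp le_rfl))
  · -- RHS ≤ LHS
    apply sup_le
    · rw [Submodule.one_le]
      exact (Algebra.adjoin O ({π} : Set L)).one_mem
    · rw [Submodule.smul_le]
      intro a ha s hs
      exact Submodule.mem_colon.mp ha s hs
end

section
/- Let O be a principal ideal Dedekind domain with fraction field E, π ∉ E quadratic over E with minimal polynomial h(x) = x² − ax + s ∈ O[x], and b ∈ O nonzero such that there is u ∈ O with 2u − a ∈ (b) and u² − au + s ∈ (b²). Then u is uniquely determined modulo (b): if u' is another element of O satisfying both conditions, then u ≡ u' mod (b). -/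
/-- Key algebraic lemma: in a UFD, if `b² ∣ d·t` and `b ∣ t − d`, then `b ∣ d`. -/
theorem aux_dvd_of_sq_dvd_mul {O : Type*} [CommRing O] [IsDomain O]
    [UniqueFactorizationMonoid O] {b d t : O} (hb : b ≠ 0)
    (h1 : b ^ 2 ∣ d * t) (h2 : b ∣ t - d) : b ∣ d := by
  letI := UniqueFactorizationMonoid.normalizationMonoid (α := O)
  letI := UniqueFactorizationMonoid.toNormalizedGCDMonoid O
  obtain ⟨b₁, d₁, hb₁, hd₁, hunit⟩ := extract_gcd b d
  set g := gcd b d with hg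
  have hgne : g ≠ 0 := fun h => hb (by rw [hb₁, h, zero_mul])
  obtain ⟨c, hc⟩ := h2
  -- t = d + b * c
  have ht : t = g * (d₁ + b₁ * c) := by
    have : t = d + b * c := by linear_combination hc
    rw [this, hb₁, hd₁]; ring
  have hcancel : b₁ ^ 2 ∣ d₁ * (d₁ + b₁ * c) := by
    have : g ^ 2 * b₁ ^ 2 ∣ g ^ 2 * (d₁ * (d₁ + b₁ * c)) := by
      have := h1
      rw [hb₁, hd₁, ht] at this
      convert this using 1 <;> ring
    exact (mul_dvd_mul_iff_left (pow_ne_zero 2 hgne)).mp this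
  have hdvd : b₁ ∣ d₁ ^ 2 := by
    have h3 : b₁ ∣ d₁ * (d₁ + b₁ * c) := dvd_trans (dvd_pow_self b₁ two_ne_zero) hcancel
    have : d₁ ^ 2 = d₁ * (d₁ + b₁ * c) - b₁ * (d₁ * c) := by ring
    rw [this]
    exact dvd_sub h3 (Dvd.intro _ rfl)
  have hrel : IsRelPrime b₁ d₁ := (gcd_isUnit_iff_isRelPrime).mp hunit
  have hb₁unit : IsUnit b₁ := (hrel.pow_right (n := 2)) dvd_rfl hdvd
  -- b = g * b₁ with b₁ a unit, so b ∣ g ∣ d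
  have : b ∣ g := by
    obtain ⟨w, hw⟩ := hb₁unit
    refine ⟨↑w⁻¹, ?_⟩
    rw [hb₁, ← hw]
    rw [mul_assoc, Units.mul_inv, mul_one]
  exact this.trans (hd₁ ▸ Dvd.intro _ rfl)

/-- Let `O` be a PID with fraction field `E`, `π ∉ E` quadratic over `E` with minimal
polynomial `h(x) = x² − ax + s ∈ O[x]`, and `b ∈ O` nonzero.  If `u, u' ∈ O` both
satisfy `2u − a ∈ (b)` and `u² − au + s ∈ (b²)`, then `u ≡ u' mod (b)`. -/
theorem congruence_solution_unique_mod_b {v : Type} (O E L : Type v)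
    [CommRing O] [IsDomain O] [IsPrincipalIdealRing O]
    [Field E] [Algebra O E] [IsFractionRing O E]
    [CommRing L] [Nontrivial L] [Algebra E L] [Algebra O L] [IsScalarTower O E L]
    [Algebra.Etale E L] (hdim : Module.finrank E L = 2)
    (π : L) (a s : O)
    (hquad : π ^ 2 - algebraMap O L a * π + algebraMap O L s = 0)
    (hπ : π ∉ (algebraMap E L).range)
    (b : O) (hb : b ≠ 0) (u u' : O)
    (hu1 : 2 * u - a ∈ Ideal.span {b}) (hu2 : u ^ 2 - a * u + s ∈ Ideal.span {b ^ 2})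
    (hu'1 : 2 * u' - a ∈ Ideal.span {b}) (hu'2 : u' ^ 2 - a * u' + s ∈ Ideal.span {b ^ 2}) :
    u - u' ∈ Ideal.span {b} := by
  rw [Ideal.mem_span_singleton] at *
  apply aux_dvd_of_sq_dvd_mul (d := u - u') (t := u + u' - a) hb
  · have := dvd_sub hu2 hu'2
    convert this using 1; ring
  · convert hu'1 using 1; ring
end

section
/- Let O be a Dedekind domain with fraction field E of characteristic 0, L a quadratic étale E-algebra, π ∈ L integral over O with π ∉ E, and O_L the integral closure of O in L. Let b ⊆ O be an ideal coprime to the ideal (2). Then b divides the conductor b_{O_L} = Ann_O(O_L/O[π]) if and only if b² divides the principal ideal (a² − 4s), where x² − ax + s is the minimal polynomial of π over E. -/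
set_option linter.unusedSectionVars false
set_option maxHeartbeats 1000000

open FractionalIdeal in
private lemma key_frac {O E : Type*} [CommRing O] [IsDomain O] [IsDedekindDomain O]
    [Field E] [Algebra O E] [IsFractionRing O E]
    (b c : Ideal O) (hb : b ≠ ⊥) (r : O)
    (h : ∀ q : E, q ∈ ((b : FractionalIdeal (nonZeroDivisors O) E))⁻¹ →
      algebraMap O E r * q ∈ ((c : Ideal O) : FractionalIdeal (nonZeroDivisors O) E)) :
    r ∈ b * c := by
  set J : FractionalIdeal (nonZeroDivisors O) E := (b : FractionalIdeal (nonZeroDivisors O) E)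
  have hJ : J ≠ 0 := coeIdeal_ne_zero.mpr hb
  have h1 : spanSingleton (nonZeroDivisors O) (algebraMap O E r) * J⁻¹ ≤
      (c : FractionalIdeal (nonZeroDivisors O) E) := by
    rw [mul_le]
    intro i hi q hq
    rw [mem_spanSingleton] at hi
    obtain ⟨z, rfl⟩ := hi
    rw [smul_mul_assoc]
    exact Submodule.smul_mem _ _ (h q hq)
  have h2 : spanSingleton (nonZeroDivisors O) (algebraMap O E r) ≤
      ((b * c : Ideal O) : FractionalIdeal (nonZeroDivisors O) E) := by
    calc spanSingleton (nonZeroDivisors O) (algebraMap O E r)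
        = spanSingleton (nonZeroDivisors O) (algebraMap O E r) * J⁻¹ * J := by
          rw [mul_assoc, inv_mul_cancel₀ hJ, mul_one]
      _ ≤ (c : FractionalIdeal (nonZeroDivisors O) E) * J := by gcongr
      _ = ((c * b : Ideal O) : FractionalIdeal (nonZeroDivisors O) E) := by rw [coeIdeal_mul]
      _ = ((b * c : Ideal O) : FractionalIdeal (nonZeroDivisors O) E) := by rw [mul_comm b c]
  have h3 : algebraMap O E r ∈ ((b * c : Ideal O) : FractionalIdeal (nonZeroDivisors O) E) :=
    h2 (mem_spanSingleton_self _ _)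
  rw [mem_coeIdeal] at h3
  obtain ⟨x, hx, hx2⟩ := h3
  rwa [(IsFractionRing.injective O E) hx2] at hx

section
variable {v : Type} {O E L : Type v}
    [Field E] [CommRing L] [Nontrivial L] [Algebra E L]

private lemma coords_exist (hdim : Module.finrank E L = 2) {π : L}
    (hπ : π ∉ (algebraMap E L).range) (z : L) :
    ∃ x y : E, z = algebraMap E L x + algebraMap E L y * π := by
  have : FiniteDimensional E L := Module.finite_of_finrank_pos (by omega)
  have hind : LinearIndependent E ![(1 : L), π] := by
    rw [linearIndependent_fin2]
    constructor
    · intro h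
      simp only [Matrix.cons_val_one, Matrix.head_cons] at h
      exact hπ ⟨0, by simp at h; simp [h]⟩
    · intro e he
      simp only [Matrix.cons_val_one, Matrix.head_cons, Matrix.cons_val_zero] at he
      rcases eq_or_ne e 0 with rfl | h0
      · simp at he
      · exact hπ ⟨e⁻¹, by
          rw [Algebra.algebraMap_eq_smul_one, ← he, smul_smul, inv_mul_cancel₀ h0, one_smul]⟩
  have hcard : Fintype.card (Fin 2) = Module.finrank E L := by simp [hdim]
  let B := basisOfLinearIndependentOfCardEqFinrank hind hcard
  have hB : ⇑B = ![(1 : L), π] := coe_basisOfLinearIndependentOfCardEqFinrank hind hcard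
  refine ⟨B.repr z 0, B.repr z 1, ?_⟩
  have := B.sum_repr z
  rw [Fin.sum_univ_two, hB] at this
  simp only [Matrix.cons_val_zero, Matrix.cons_val_one, Matrix.head_cons] at this
  rw [Algebra.smul_def, Algebra.smul_def, mul_one] at this
  exact this.symm

private lemma coords_unique {π : L} (hπ : π ∉ (algebraMap E L).range) {x y x' y' : E}
    (h : algebraMap E L x + algebraMap E L y * π = algebraMap E L x' + algebraMap E L y' * π) :
    x = x' ∧ y = y' := by
  have hinj : Function.Injective (algebraMap E L) := RingHom.injective _
  have hy : y = y' := by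
    by_contra hne
    apply hπ
    refine ⟨(y - y')⁻¹ * (x' - x), ?_⟩
    have h2 : algebraMap E L (y - y') * π = algebraMap E L (x' - x) := by
      rw [map_sub, map_sub]; linear_combination h
    rw [map_mul]
    rw [← h2, ← mul_assoc, ← map_mul, inv_mul_cancel₀ (sub_ne_zero.mpr hne), map_one, one_mul]
  subst hy
  have : algebraMap E L x = algebraMap E L x' := by
    have := h; rwa [add_left_inj] at this
  exact ⟨hinj this, rfl⟩

private lemma exists_sigma (hdim : Module.finrank E L = 2) {π : L}
    (hπ : π ∉ (algebraMap E L).range) {aE sE : E}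
    (hq : π ^ 2 = algebraMap E L aE * π - algebraMap E L sE) :
    ∃ σ : L →ₐ[E] L, ∀ x y : E,
      σ (algebraMap E L x + algebraMap E L y * π)
        = algebraMap E L (x + aE * y) - algebraMap E L y * π := by
  have : FiniteDimensional E L := Module.finite_of_finrank_pos (by omega)
  have hind : LinearIndependent E ![(1 : L), π] := by
    rw [linearIndependent_fin2]
    constructor
    · intro h
      simp only [Matrix.cons_val_one, Matrix.head_cons] at h
      exact hπ ⟨0, by simp at h; simp [h]⟩
    · intro e he
      simp only [Matrix.cons_val_one, Matrix.head_cons, Matrix.cons_val_zero] at he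
      rcases eq_or_ne e 0 with rfl | h0
      · simp at he
      · exact hπ ⟨e⁻¹, by
          rw [Algebra.algebraMap_eq_smul_one, ← he, smul_smul, inv_mul_cancel₀ h0, one_smul]⟩
  have hcard : Fintype.card (Fin 2) = Module.finrank E L := by simp [hdim]
  let B := basisOfLinearIndependentOfCardEqFinrank hind hcard
  have hB : ⇑B = ![(1 : L), π] := coe_basisOfLinearIndependentOfCardEqFinrank hind hcard
  set σl : L →ₗ[E] L := B.constr E ![(1 : L), algebraMap E L aE - π] with hσl
  have hB0 : B 0 = 1 := by rw [hB]; rfl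
  have hB1 : B 1 = π := by rw [hB]; rfl
  have hσ1 : σl 1 = 1 := by
    conv_lhs => rw [← hB0, hσl, Module.Basis.constr_basis]
    simp
  have hσπ : σl π = algebraMap E L aE - π := by
    conv_lhs => rw [← hB1, hσl, Module.Basis.constr_basis]
    simp
  have hform : ∀ x y : E, σl (algebraMap E L x + algebraMap E L y * π)
      = algebraMap E L x + algebraMap E L y * (algebraMap E L aE - π) := by
    intro x y
    have h1 : algebraMap E L x + algebraMap E L y * π = x • (1 : L) + y • π := by
      rw [Algebra.smul_def, Algebra.smul_def, mul_one]
    rw [h1, map_add, map_smul, map_smul, hσ1, hσπ, Algebra.smul_def, Algebra.smul_def, mul_one]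
  have hmul : ∀ u u' : L, σl (u * u') = σl u * σl u' := by
    intro u u'
    obtain ⟨x, y, rfl⟩ := coords_exist hdim hπ u
    obtain ⟨x', y', rfl⟩ := coords_exist hdim hπ u'
    have hprod : (algebraMap E L x + algebraMap E L y * π) *
        (algebraMap E L x' + algebraMap E L y' * π)
        = algebraMap E L (x * x' - sE * (y * y'))
          + algebraMap E L (x * y' + x' * y + aE * (y * y')) * π := by
      simp only [map_sub, map_add, map_mul]
      linear_combination (algebraMap E L y * algebraMap E L y') * hq
    rw [hprod, hform, hform, hform]
    simp only [map_sub, map_add, map_mul]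
    linear_combination (-(algebraMap E L y * algebraMap E L y')) * hq
  refine ⟨AlgHom.ofLinearMap σl hσ1 hmul, ?_⟩
  intro x y
  show σl _ = _
  rw [hform, map_add, map_mul]
  ring

end

private lemma sq_integral {O L : Type*} [CommRing O] [CommRing L] [Algebra O L] {w : L} {g : O}
    (h : w ^ 2 = algebraMap O L g) : IsIntegral O w := by
  refine ⟨Polynomial.X ^ 2 - Polynomial.C g, Polynomial.monic_X_pow_sub_C g two_ne_zero, ?_⟩
  simp [h]

/-- Let `O` be a Dedekind domain with fraction field `E` of characteristic `0`, `L` a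
quadratic étale `E`-algebra, `π ∈ L` integral over `O` with `π ∉ E` and minimal
polynomial `x² − ax + s` over `E`, and `O_L` the integral closure of `O` in `L`.
Let `b ⊆ O` be an ideal coprime to `(2)`.  Then `b` divides the conductor
`b_{O_L} = Ann_O(O_L/O[π])` if and only if `b²` divides the principal ideal
`(a² − 4s)` (divisibility of ideals being reverse inclusion). -/
theorem odd_ideal_divides_conductor_iff_sq_divides_discriminant {v : Type} (O E L : Type v)
    [CommRing O] [IsDomain O] [IsDedekindDomain O]
    [Field E] [CharZero E] [Algebra O E] [IsFractionRing O E]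
    [CommRing L] [Nontrivial L] [Algebra E L] [Algebra O L] [IsScalarTower O E L]
    [Algebra.Etale E L] (hdim : Module.finrank E L = 2)
    (π : L) (a s : O)
    (hquad : π ^ 2 - algebraMap O L a * π + algebraMap O L s = 0)
    (hπ : π ∉ (algebraMap E L).range)
    (b : Ideal O) (hcop : b ⊔ Ideal.span {(2 : O)} = ⊤) :
    ((Subalgebra.toSubmodule (Algebra.adjoin O ({π} : Set L))).colon
        (Subalgebra.toSubmodule (integralClosure O L)) ≤ b) ↔
      Ideal.span {a ^ 2 - 4 * s} ≤ b ^ 2 := by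
  have hinjOE : Function.Injective (algebraMap O E) := IsFractionRing.injective O E
  have hinjEL : Function.Injective (algebraMap E L) := RingHom.injective _
  have htower : ∀ o : O, algebraMap O L o = algebraMap E L (algebraMap O E o) := fun o => by
    rw [IsScalarTower.algebraMap_apply O E L]
  set aE : E := algebraMap O E a with haE
  set sE : E := algebraMap O E s with hsE
  set DO : O := a ^ 2 - 4 * s with hDO
  have hDE : algebraMap O E DO = aE ^ 2 - 4 * sE := by
    rw [hDO, map_sub, map_mul, map_pow, map_ofNat]
  have hquadE : π ^ 2 = algebraMap E L aE * π - algebraMap E L sE := by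
    rw [← htower, ← htower]; linear_combination hquad
  obtain ⟨σ, hσ⟩ := exists_sigma hdim hπ hquadE
  -- π is integral over O
  have hπint : IsIntegral O π := by
    refine ⟨Polynomial.X ^ 2 + (Polynomial.C (-a) * Polynomial.X + Polynomial.C s),
      Polynomial.monic_X_pow_add Polynomial.degree_linear_lt, ?_⟩
    simpa using by linear_combination hquad
  -- the conjugation preserves integrality
  have hσint : ∀ z : L, IsIntegral O z → IsIntegral O (σ z) := fun z hz =>
    hz.map (σ.restrictScalars O)
  -- integral scalars are in O
  have hIC : ∀ e : E, IsIntegral O (algebraMap E L e) → ∃ u : O, algebraMap O E u = e := by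
    intro e he
    have he' : IsIntegral O ((IsScalarTower.toAlgHom O E L) e) := he
    exact IsIntegrallyClosed.isIntegral_iff.mp
      ((isIntegral_algHom_iff (IsScalarTower.toAlgHom O E L) hinjEL).mp he')
  -- the element τ = 2π - a
  set τ : L := 2 * π - algebraMap E L aE with hτ
  have hτint : IsIntegral O τ := by
    have : τ = algebraMap O L 2 * π - algebraMap O L a := by
      rw [hτ, haE, htower 2, htower a, map_ofNat, map_ofNat]
    rw [this]
    exact (isIntegral_algebraMap.mul hπint).sub isIntegral_algebraMap
  have hτsq : τ ^ 2 = algebraMap E L (algebraMap O E DO) := by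
    rw [hDE, map_sub, map_mul, map_pow, map_ofNat, hτ]
    linear_combination (4 : L) * hquadE
  -- coordinates facts for integral elements
  have hsub : ∀ x y : E, (algebraMap E L x + algebraMap E L y * π)
      - σ (algebraMap E L x + algebraMap E L y * π) = algebraMap E L y * τ := by
    intro x y
    rw [hσ, hτ, map_add, map_mul]
    ring
  have hadd : ∀ x y : E, (algebraMap E L x + algebraMap E L y * π)
      + σ (algebraMap E L x + algebraMap E L y * π) = algebraMap E L (2 * x + aE * y) := by
    intro x y
    simp only [hσ, map_add, map_mul, map_ofNat]
    ring
  have hcoords := coords_exist hdim hπ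
  -- trace is integral
  have hTfact : ∀ x y : E, IsIntegral O (algebraMap E L x + algebraMap E L y * π) →
      ∃ T : O, algebraMap O E T = 2 * x + aE * y := by
    intro x y hz
    apply hIC
    rw [← hadd x y]
    exact hz.add (hσint _ hz)
  -- y * D is integral
  have hyD : ∀ x y : E, IsIntegral O (algebraMap E L x + algebraMap E L y * π) →
      ∃ u : O, algebraMap O E u = y * algebraMap O E DO := by
    intro x y hz
    apply hIC
    have heq : algebraMap E L (y * algebraMap O E DO)
        = ((algebraMap E L x + algebraMap E L y * π)
            - σ (algebraMap E L x + algebraMap E L y * π)) * τ := by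
      rw [hsub x y, mul_assoc, ← sq, hτsq, ← map_mul]
    rw [heq]
    exact (hz.sub (hσint _ hz)).mul hτint
  -- y * y' * D is integral
  have hyyD : ∀ x y x' y' : E, IsIntegral O (algebraMap E L x + algebraMap E L y * π) →
      IsIntegral O (algebraMap E L x' + algebraMap E L y' * π) →
      ∃ u : O, algebraMap O E u = y * y' * algebraMap O E DO := by
    intro x y x' y' hz hz'
    apply hIC
    have heq : algebraMap E L (y * y' * algebraMap O E DO)
        = ((algebraMap E L x + algebraMap E L y * π)
            - σ (algebraMap E L x + algebraMap E L y * π)) *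
          ((algebraMap E L x' + algebraMap E L y' * π)
            - σ (algebraMap E L x' + algebraMap E L y' * π)) := by
      rw [hsub x y, hsub x' y']
      have : algebraMap E L y * τ * (algebraMap E L y' * τ)
          = algebraMap E L y * algebraMap E L y' * τ ^ 2 := by ring
      rw [this, hτsq, ← map_mul, ← map_mul]
    rw [heq]
    exact (hz.sub (hσint _ hz)).mul (hz'.sub (hσint _ hz'))
  -- y * D * x' is integral
  have hyDx : ∀ x y x' y' : E, IsIntegral O (algebraMap E L x + algebraMap E L y * π) →
      IsIntegral O (algebraMap E L x' + algebraMap E L y' * π) →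
      ∃ u : O, algebraMap O E u = y * algebraMap O E DO * x' := by
    intro x y x' y' hz hz'
    obtain ⟨uy, huy⟩ := hyD x y hz
    obtain ⟨u2, hu2⟩ := hyyD x y x' y' hz hz'
    apply hIC
    have heq : algebraMap E L (y * algebraMap O E DO * x')
        = algebraMap O L uy * (algebraMap E L x' + algebraMap E L y' * π)
          - algebraMap O L u2 * π := by
      rw [htower uy, htower u2, huy, hu2]
      simp only [map_mul]
      ring
    rw [heq]
    exact (isIntegral_algebraMap.mul hz').sub (isIntegral_algebraMap.mul hπint)
  -- x * D is integral
  have hxD : ∀ x y : E, IsIntegral O (algebraMap E L x + algebraMap E L y * π) →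
      ∃ u : O, algebraMap O E u = x * algebraMap O E DO := by
    intro x y hz
    obtain ⟨uy, huy⟩ := hyD x y hz
    apply hIC
    have heq : algebraMap E L (x * algebraMap O E DO)
        = algebraMap O L DO * (algebraMap E L x + algebraMap E L y * π)
          - algebraMap O L uy * π := by
      rw [htower uy, htower DO, huy]
      simp only [map_mul]
      ring
    rw [heq]
    exact (isIntegral_algebraMap.mul hz).sub (isIntegral_algebraMap.mul hπint)
  -- adjoin O {π} membership
  have hadjmem : ∀ u w : O, algebraMap O L u + algebraMap O L w * π ∈
      Subalgebra.toSubmodule (Algebra.adjoin O ({π} : Set L)) := by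
    intro u w
    rw [Subalgebra.mem_toSubmodule]
    exact add_mem (Subalgebra.algebraMap_mem _ u)
      (mul_mem (Subalgebra.algebraMap_mem _ w) (Algebra.subset_adjoin rfl))
  have hπ2O : π ^ 2 = algebraMap O L a * π - algebraMap O L s := by linear_combination hquad
  have hadjcoords : ∀ w ∈ Algebra.adjoin O ({π} : Set L),
      ∃ u v2 : O, w = algebraMap O L u + algebraMap O L v2 * π := by
    intro w hw
    induction hw using Algebra.adjoin_induction with
    | mem x hx =>
      rw [Set.eq_of_mem_singleton hx]
      exact ⟨0, 1, by simp⟩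
    | algebraMap r => exact ⟨r, 0, by simp⟩
    | add p q hp hq ihp ihq =>
      obtain ⟨u1, v1, rfl⟩ := ihp
      obtain ⟨u2, v2, rfl⟩ := ihq
      exact ⟨u1 + u2, v1 + v2, by simp only [map_add]; ring⟩
    | mul p q hp hq ihp ihq =>
      obtain ⟨u1, v1, rfl⟩ := ihp
      obtain ⟨u2, v2, rfl⟩ := ihq
      refine ⟨u1 * u2 - s * (v1 * v2), u1 * v2 + u2 * v1 + a * (v1 * v2), ?_⟩
      simp only [map_add, map_mul, map_sub]
      linear_combination (algebraMap O L v1 * algebraMap O L v2) * hπ2O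
  -- membership in the integral closure submodule
  have hICmem : ∀ z : L, z ∈ Subalgebra.toSubmodule (integralClosure O L) ↔ IsIntegral O z := by
    intro z
    rw [Subalgebra.mem_toSubmodule]
    exact mem_integralClosure_iff O L
  -- D ≠ 0
  have hDO0 : DO ≠ 0 := by
    intro h0
    have hred : IsReduced L := Algebra.FormallyUnramified.isReduced_of_field E L
    have hτ2 : τ ^ 2 = 0 := by rw [hτsq, h0, map_zero, map_zero]
    have hτ0 : τ = 0 := IsNilpotent.eq_zero ⟨2, hτ2⟩
    have h2L : algebraMap E L aE = 2 * π := by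
      have := hτ0
      rw [hτ] at this
      linear_combination -this
    have h2E : (2 : E) ≠ 0 := two_ne_zero
    apply hπ
    refine ⟨aE / 2, ?_⟩
    rw [div_eq_mul_inv, map_mul, h2L, show (2 : L) = algebraMap E L 2 from (map_ofNat _ 2).symm,
      mul_comm (algebraMap E L 2) π, mul_assoc, ← map_mul, mul_inv_cancel₀ h2E, map_one, mul_one]
  -- D ∈ conductor
  have hDcond : DO ∈ (Subalgebra.toSubmodule (Algebra.adjoin O ({π} : Set L))).colon
      (Subalgebra.toSubmodule (integralClosure O L)) := by
    rw [Submodule.mem_colon]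
    intro z hz'
    have hz : IsIntegral O z := (hICmem z).mp hz'
    obtain ⟨x, y, hzc⟩ := hcoords z
    rw [hzc] at hz
    obtain ⟨ux, hux⟩ := hxD x y hz
    obtain ⟨uy, huy⟩ := hyD x y hz
    have : DO • z = algebraMap O L ux + algebraMap O L uy * π := by
      rw [hzc, Algebra.smul_def, htower DO, htower ux, htower uy, hux, huy]
      simp only [map_mul]
      ring
    rw [this]
    exact hadjmem ux uy
  -- coprimality consequence
  obtain ⟨β, hβ, w2, hw2, hβsum⟩ := Submodule.mem_sup.mp (hcop ▸ Submodule.mem_top (x := (1 : O)))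
  obtain ⟨t, ht⟩ := Ideal.mem_span_singleton'.mp hw2
  -- ht : t * 2 = w2, hβsum : β + w2 = 1
  constructor
  · -- forward direction
    intro H
    rw [Ideal.span_singleton_le_iff_mem]
    have hDb : DO ∈ b := H hDcond
    rcases eq_or_ne b ⊥ with rfl | hb
    · exact absurd ((Ideal.mem_bot).mp hDb) hDO0
    have hJ : ((b : Ideal O) : FractionalIdeal (nonZeroDivisors O) E) ≠ 0 :=
      FractionalIdeal.coeIdeal_ne_zero.mpr hb
    have hqmul : ∀ q : E, q ∈ ((b : Ideal O) : FractionalIdeal (nonZeroDivisors O) E)⁻¹ →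
        ∀ m : O, m ∈ b → ∃ g : O, algebraMap O E g = algebraMap O E m * q := by
      intro q hqi m hm
      have : q * algebraMap O E m ∈ (1 : FractionalIdeal (nonZeroDivisors O) E) :=
        (FractionalIdeal.mem_inv_iff hJ).mp hqi _ ((FractionalIdeal.mem_coeIdeal _).mpr ⟨m, hm, rfl⟩)
      obtain ⟨g, hg⟩ := (FractionalIdeal.mem_one_iff _).mp this
      exact ⟨g, by rw [hg, mul_comm]⟩
    -- all the uy's are in the conductor, hence in b
    have huyb : ∀ x y : E, IsIntegral O (algebraMap E L x + algebraMap E L y * π) →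
        ∀ uy : O, algebraMap O E uy = y * algebraMap O E DO → uy ∈ b := by
      intro x y hz uy huy
      apply H
      rw [Submodule.mem_colon]
      intro z' hz1'
      have hz' : IsIntegral O z' := (hICmem z').mp hz1'
      obtain ⟨x', y', hzc'⟩ := hcoords z'
      rw [hzc'] at hz'
      obtain ⟨u1, hu1⟩ := hyDx x y x' y' hz hz'
      obtain ⟨u2, hu2⟩ := hyyD x y x' y' hz hz'
      have : uy • z' = algebraMap O L u1 + algebraMap O L u2 * π := by
        rw [hzc', Algebra.smul_def, htower uy, htower u1, htower u2, hu1, hu2, huy]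
        simp only [map_mul]
        ring
      rw [this]
      exact hadjmem u1 u2
    have h2Dbb : 2 * DO ∈ b * b := by
      apply key_frac (E := E) b b hb
      intro q hq
      obtain ⟨g, hg⟩ := hqmul q hq DO hDb
      have h2g : 2 * g ∈ (Subalgebra.toSubmodule (Algebra.adjoin O ({π} : Set L))).colon
          (Subalgebra.toSubmodule (integralClosure O L)) := by
        rw [Submodule.mem_colon]
        intro z hz1
        have hz : IsIntegral O z := (hICmem z).mp hz1
        obtain ⟨x, y, hzc⟩ := hcoords z
        rw [hzc] at hz
        obtain ⟨T, hT⟩ := hTfact x y hz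
        obtain ⟨uy, huy⟩ := hyD x y hz
        have huyb' : uy ∈ b := huyb x y hz uy huy
        obtain ⟨vy, hvy⟩ := hqmul q hq uy huyb'
        have hDTb : DO * T ∈ b := Ideal.mul_mem_right T b hDb
        obtain ⟨w', hw'⟩ := hqmul q hq (DO * T) hDTb
        -- coordinates of (2g) • z
        have hyc : algebraMap O E (2 * vy) = algebraMap O E (2 * g) * y := by
          rw [map_mul, map_mul, hvy, hg, huy, map_ofNat]
          ring
        have hxc : algebraMap O E (w' - a * vy) = algebraMap O E (2 * g) * x := by
          have h2x : (2 : E) * x = algebraMap O E T - aE * y := by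
            rw [hT]; ring
          rw [map_sub, map_mul, map_mul, hw', hvy, hg, huy, map_mul, map_ofNat]
          have : algebraMap O E DO * algebraMap O E T * q
              = algebraMap O E DO * q * ((2:E) * x) + aE * (y * algebraMap O E DO * q) := by
            rw [h2x]; ring
          rw [this, haE]
          ring
        have : (2 * g) • z = algebraMap O L (w' - a * vy) + algebraMap O L (2 * vy) * π := by
          rw [hzc, Algebra.smul_def, htower (2 * g), htower (w' - a * vy), htower (2 * vy),
            hyc, hxc]
          simp only [map_mul]
          ring
        rw [this]
        exact hadjmem (w' - a * vy) (2 * vy)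
      have h2gb : 2 * g ∈ b := H h2g
      rw [FractionalIdeal.mem_coeIdeal]
      refine ⟨2 * g, h2gb, ?_⟩
      rw [map_mul, map_mul, hg, map_ofNat]
      ring
    -- conclude DO ∈ b^2
    have : DO = DO * β + t * (2 * DO) := by
      have h5 : DO * (β + w2) = DO := by rw [hβsum, mul_one]
      rw [← ht] at h5
      linear_combination -h5
    rw [this, pow_two]
    exact add_mem (Ideal.mul_mem_mul hDb hβ) (Ideal.mul_mem_left _ t h2Dbb)
  · -- backward direction
    intro H c hcC
    have hD2 : DO ∈ b ^ 2 := H (Ideal.subset_span rfl)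
    rcases eq_or_ne b ⊥ with rfl | hb
    · rw [pow_two, Ideal.bot_mul, Ideal.mem_bot] at hD2
      exact absurd hD2 hDO0
    have hJ : ((b : Ideal O) : FractionalIdeal (nonZeroDivisors O) E) ≠ 0 :=
      FractionalIdeal.coeIdeal_ne_zero.mpr hb
    have hqmul : ∀ q : E, q ∈ ((b : Ideal O) : FractionalIdeal (nonZeroDivisors O) E)⁻¹ →
        ∀ m : O, m ∈ b → ∃ g : O, algebraMap O E g = algebraMap O E m * q := by
      intro q hqi m hm
      have : q * algebraMap O E m ∈ (1 : FractionalIdeal (nonZeroDivisors O) E) :=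
        (FractionalIdeal.mem_inv_iff hJ).mp hqi _ ((FractionalIdeal.mem_coeIdeal _).mpr ⟨m, hm, rfl⟩)
      obtain ⟨g, hg⟩ := (FractionalIdeal.mem_one_iff _).mp this
      exact ⟨g, by rw [hg, mul_comm]⟩
    have h2cb : 2 * c ∈ b * ⊤ := by
      apply key_frac (E := E) b ⊤ hb
      intro q hq
      -- q * q * D ∈ O
      have hq2 : ∃ g : O, algebraMap O E g = algebraMap O E DO * q * q := by
        rw [pow_two] at hD2
        refine Submodule.mul_induction_on hD2 ?_ ?_
        · intro i hi j hj
          obtain ⟨g1, hg1⟩ := hqmul q hq i hi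
          obtain ⟨g2, hg2⟩ := hqmul q hq j hj
          exact ⟨g1 * g2, by rw [map_mul, hg1, hg2, map_mul]; ring⟩
        · intro w1 w2 ⟨g1, hg1⟩ ⟨g2, hg2⟩
          exact ⟨g1 + g2, by rw [map_add, hg1, hg2, map_add]; ring⟩
      obtain ⟨g, hg⟩ := hq2
      -- the auxiliary integral element ω
      set ω : L := algebraMap E L (2 * q) * π - algebraMap E L (q * aE) with hω
      have hωsq : ω ^ 2 = algebraMap O L g := by
        rw [hω, htower g, hg, hDE]
        simp only [map_mul, map_sub, map_add, map_pow, map_ofNat]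
        linear_combination (4 * algebraMap E L q * algebraMap E L q) * hquadE
      have hωint : IsIntegral O ω := sq_integral hωsq
      have hcω : c • ω ∈ Subalgebra.toSubmodule (Algebra.adjoin O ({π} : Set L)) :=
        Submodule.mem_colon.mp hcC ω ((hICmem ω).mpr hωint)
      obtain ⟨u, v2, huv⟩ := hadjcoords _ ((Subalgebra.mem_toSubmodule _).mp hcω)
      -- compare coordinates
      have hform : c • ω = algebraMap E L (-(algebraMap O E c * (q * aE)))
          + algebraMap E L (algebraMap O E c * (2 * q)) * π := by
        rw [hω, Algebra.smul_def, htower c]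
        simp only [map_mul, map_neg]
        ring
      have hform2 : c • ω = algebraMap E L (algebraMap O E u)
          + algebraMap E L (algebraMap O E v2) * π := by
        rw [huv, htower u, htower v2]
      have hcoordeq := coords_unique hπ (hform.symm.trans hform2)
      have hkey : algebraMap O E c * (2 * q) = algebraMap O E v2 := hcoordeq.2
      rw [FractionalIdeal.mem_coeIdeal]
      refine ⟨v2, Submodule.mem_top, ?_⟩
      rw [← hkey, map_mul, map_ofNat]
      ring
    rw [Ideal.mul_top] at h2cb
    -- conclude c ∈ b
    have : c = β * c + t * (2 * c) := by
      have h5 : (β + w2) * c = c := by rw [hβsum, one_mul]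
      rw [← ht] at h5
      linear_combination -h5
    rw [this]
    exact add_mem (Ideal.mul_mem_right c b hβ) (Ideal.mul_mem_left b t h2cb)
end

section
/- Let O be a PID with fraction field E, L = E[π] a quadratic étale E-algebra with π integral over O, π ∉ E, and O_L the integral closure of O in L. Fix a generator b_{O_L} of the conductor of O[π] in O_L and u ∈ O such that (1, e₂) with e₂ = (π − u)/b_{O_L} is an O-basis of O_L. Then for any O-order S ⊆ L containing π with conductor generated by b_S, the pair (1, (b_{O_L}/b_S)·e₂) = (1, (π − u)/b_S) is an O-basis of S. -/
/-- Let `O` be a PID with fraction field `E`, `L = E[π]` a quadratic étale `E`-algebra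
with `π` integral over `O`, `π ∉ E`, and `O_L` the integral closure of `O` in `L`.
Fix a generator `b_{O_L}` of the conductor of `O[π]` in `O_L` and `u ∈ O` such that
`(1, e₂)` with `e₂ = (π − u)/b_{O_L}` is an `O`-basis of `O_L`.  Then for any `O`-order
`S ⊆ L` containing `π` with conductor generated by `b_S`, the pair `(1, (π − u)/b_S)`
is an `O`-basis of `S`. -/
theorem basis_of_intermediate_order {v : Type} (O E L : Type v)
    [CommRing O] [IsDomain O] [IsPrincipalIdealRing O]
    [Field E] [Algebra O E] [IsFractionRing O E]
    [CommRing L] [Nontrivial L] [Algebra E L] [Algebra O L] [IsScalarTower O E L]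
    [Algebra.Etale E L] (hdim : Module.finrank E L = 2)
    (π : L) (hint : IsIntegral O π) (hπ : π ∉ (algebraMap E L).range)
    (hgen : Algebra.adjoin E ({π} : Set L) = ⊤)
    (bOL : O) (u : O) (e₂ : L)
    (he₂ : algebraMap O L bOL * e₂ = π - algebraMap O L u)
    (hbOL : Ideal.span {bOL} =
      (Subalgebra.toSubmodule (Algebra.adjoin O ({π} : Set L))).colon
        (Subalgebra.toSubmodule (integralClosure O L)))
    (c : Module.Basis (Fin 2) O (integralClosure O L))
    (hc0 : (c 0 : L) = 1) (hc1 : (c 1 : L) = e₂)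
    (S : Subalgebra O L) (hπS : π ∈ S)
    (hfg : (Subalgebra.toSubmodule S).FG)
    (hspan : Submodule.span E (S : Set L) = ⊤)
    (bS : O)
    (hbS : Ideal.span {bS} =
      (Subalgebra.toSubmodule (Algebra.adjoin O ({π} : Set L))).colon
        (Subalgebra.toSubmodule S))
    (e₂' : L) (he₂' : algebraMap O L bS * e₂' = π - algebraMap O L u) :
    ∃ d : Module.Basis (Fin 2) O S, (d 0 : L) = 1 ∧ (d 1 : L) = e₂' := by
  classical
  have hα : ∀ (a : O) (x : L), a • x = algebraMap O L a * x := fun a x => Algebra.smul_def a x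
  have hinjE : Function.Injective (algebraMap E L) := (algebraMap E L).injective
  have hinjO : Function.Injective (algebraMap O L) := by
    rw [IsScalarTower.algebraMap_eq O E L]
    exact hinjE.comp (IsFractionRing.injective O E)
  have hbOL0 : bOL ≠ 0 := by
    intro h
    apply hπ
    rw [h, map_zero, zero_mul] at he₂
    exact ⟨algebraMap O E u, by
      rw [← IsScalarTower.algebraMap_apply]
      exact (sub_eq_zero.mp he₂.symm).symm⟩
  have hbS0 : bS ≠ 0 := by
    intro h
    apply hπ
    rw [h, map_zero, zero_mul] at he₂'
    exact ⟨algebraMap O E u, by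
      rw [← IsScalarTower.algebraMap_apply]
      exact (sub_eq_zero.mp he₂'.symm).symm⟩
  -- linear independence of (1, e₂) over O
  have hLIe : LinearIndependent O ![(1:L), e₂] := by
    have h2 := c.linearIndependent.map' (Subalgebra.val (integralClosure O L)).toLinearMap
      (LinearMap.ker_eq_bot_of_injective Subtype.val_injective)
    have h3 : ⇑(Subalgebra.val (integralClosure O L)).toLinearMap ∘ ⇑c = ![(1:L), e₂] := by
      funext i; fin_cases i <;> simp [hc0, hc1]
    rwa [h3] at h2
  have hpair : ∀ a b : O, a • (1:L) + b • e₂ = 0 → a = 0 ∧ b = 0 :=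
    fun a b => LinearIndependent.pair_iff.mp hLIe a b
  have huniq : ∀ a b a' b' : O, a • (1:L) + b • e₂ = a' • (1:L) + b' • e₂ → a = a' ∧ b = b' := by
    intro a b a' b' h
    have h0 : (a - a') • (1:L) + (b - b') • e₂ = 0 := by
      rw [sub_smul, sub_smul, sub_add_sub_comm, h, sub_self]
    obtain ⟨h1, h2⟩ := hpair _ _ h0
    exact ⟨sub_eq_zero.mp h1, sub_eq_zero.mp h2⟩
  -- coordinates in O_L
  have hcoord : ∀ x : integralClosure O L,
      (x : L) = (c.repr x 0) • (1:L) + (c.repr x 1) • e₂ := by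
    intro x
    have h := c.sum_repr x
    rw [Fin.sum_univ_two] at h
    conv_lhs => rw [← h]
    push_cast [hc0, hc1]
    ring
  -- π as combination
  have hπrep : π = u • (1:L) + bOL • e₂ := by
    rw [hα, hα, mul_one, he₂]; ring
  -- the submodule A = span {1, π} equals O[π]
  set A : Submodule O L := Submodule.span O {(1:L), π} with hAdef
  set mel : integralClosure O L := ⟨π, hint⟩ * c 1 with hmdef
  set ma : O := c.repr mel 0 with hadef
  set mb : O := c.repr mel 1 with hbdef
  have hm : π * e₂ = algebraMap O L ma + algebraMap O L mb * e₂ := by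
    have := hcoord mel
    rw [hα, hα, mul_one] at this
    rw [← this, hmdef]
    push_cast [hc1]
    ring
  have hπ2 : π * π ∈ A := by
    have h : π * π = (bOL*ma - mb*u) • (1:L) + (u + mb) • π := by
      rw [hα, hα, mul_one]
      push_cast [map_sub, map_mul, map_add]
      linear_combination (algebraMap O L mb - π) * he₂ + algebraMap O L bOL * hm
    rw [h]
    exact Submodule.add_mem _
      (Submodule.smul_mem _ _ (Submodule.subset_span (by simp)))
      (Submodule.smul_mem _ _ (Submodule.subset_span (by simp)))
  have h1A : (1:L) ∈ A := Submodule.subset_span (by simp)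
  have hπA : π ∈ A := Submodule.subset_span (by simp)
  have hmul : ∀ x y : L, x ∈ A → y ∈ A → x * y ∈ A := by
    intro x y hx hy
    induction hx using Submodule.span_induction with
    | mem x hx =>
      induction hy using Submodule.span_induction with
      | mem y hy =>
        simp only [Set.mem_insert_iff, Set.mem_singleton_iff] at hx hy
        rcases hx with rfl | rfl <;> rcases hy with rfl | rfl <;>
          first
            | (rw [one_mul]; assumption)
            | (rw [mul_one]; assumption)
            | exact hπ2
      | zero => simpa using Submodule.zero_mem A
      | add y z _ _ hy hz => rw [mul_add]; exact Submodule.add_mem _ hy hz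
      | smul r y _ hy => rw [mul_smul_comm]; exact Submodule.smul_mem _ _ hy
    | zero => simpa using Submodule.zero_mem A
    | add x z _ _ hx hz => rw [add_mul]; exact Submodule.add_mem _ hx hz
    | smul r x _ hx => rw [smul_mul_assoc]; exact Submodule.smul_mem _ _ hx
  have hAeq : Subalgebra.toSubmodule (Algebra.adjoin O ({π} : Set L)) = A := by
    apply le_antisymm
    · have h : Algebra.adjoin O ({π} : Set L) ≤ A.toSubalgebra h1A hmul :=
        Algebra.adjoin_le_iff.mpr
          (by intro z hz; simp only [Set.mem_singleton_iff] at hz; subst hz; exact hπA)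
      exact h
    · rw [Submodule.span_le]
      rintro z (rfl | hz)
      · exact Subalgebra.one_mem _
      · simp only [Set.mem_singleton_iff] at hz; subst hz
        exact Algebra.subset_adjoin rfl
  -- membership in A characterized
  have hAmem : ∀ z : L, z ∈ A ↔ ∃ a b : O, z = a • (1:L) + b • (bOL • e₂) := by
    intro z
    constructor
    · intro hz
      obtain ⟨a, b, hab⟩ := Submodule.mem_span_pair.mp hz
      refine ⟨a + b*u, b, ?_⟩
      rw [← hab, hπrep]
      rw [smul_smul]
      module
    · rintro ⟨a, b, rfl⟩
      have h : a • (1:L) + b • (bOL • e₂) = (a - b*u) • (1:L) + b • π := by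
        rw [hπrep]; rw [smul_smul]; module
      rw [h]
      exact Submodule.add_mem _
        (Submodule.smul_mem _ _ (Submodule.subset_span (by simp)))
        (Submodule.smul_mem _ _ (Submodule.subset_span (by simp)))
  -- S consists of integral elements
  have hSint : ∀ x ∈ S, IsIntegral O x := fun x hx => IsIntegral.of_mem_of_fg S hfg x hx
  -- the second-coordinate ideal of S
  set ι : integralClosure O L →ₗ[O] L := (Subalgebra.val (integralClosure O L)).toLinearMap with hιdef
  set T' : Submodule O (integralClosure O L) := (Subalgebra.toSubmodule S).comap ι with hT'def
  set I : Ideal O := Submodule.map (c.coord 1) T' with hIdef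
  haveI hIp : I.IsPrincipal := IsPrincipalIdealRing.principal I
  set g : O := Submodule.IsPrincipal.generator I with hgdef
  have hIg : I = Ideal.span {g} := (Ideal.span_singleton_generator I).symm
  have hmemT' : ∀ x : integralClosure O L, x ∈ T' ↔ (x : L) ∈ S := by
    intro x
    rw [hT'def, Submodule.mem_comap]
    rfl
  -- bOL ∈ I, so g ∣ bOL
  have hpcoord : c.repr ⟨π, hint⟩ 0 = u ∧ c.repr ⟨π, hint⟩ 1 = bOL := by
    have h1 := hcoord ⟨π, hint⟩
    have h2 : ((⟨π, hint⟩ : integralClosure O L) : L) = π := rfl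
    rw [h2] at h1
    exact huniq _ _ _ _ (h1.symm.trans hπrep)
  have hbOLI : bOL ∈ I := by
    refine ⟨⟨π, hint⟩, (hmemT' _).mpr hπS, ?_⟩
    rw [Module.Basis.coord_apply, hpcoord.2]
  have hgbOL : g ∣ bOL := Ideal.mem_span_singleton.mp (hIg ▸ hbOLI)
  -- choose s₀ with coordinates (t, g)
  obtain ⟨s₀, hs₀T, hs₀g⟩ : ∃ s₀ ∈ T', c.coord 1 s₀ = g :=
    Submodule.mem_map.mp (Submodule.IsPrincipal.generator_mem I)
  rw [Module.Basis.coord_apply] at hs₀g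
  set t : O := c.repr s₀ 0 with htdef
  have hs₀L : (s₀ : L) = t • (1:L) + g • e₂ := by
    rw [hcoord s₀, hs₀g]
  have hs₀S : (s₀ : L) ∈ S := (hmemT' _).mp hs₀T
  -- bS • S ⊆ O[π]
  have hbScolon : ∀ x ∈ S, bS • x ∈ A := by
    intro x hx
    have h : bS ∈ (Subalgebra.toSubmodule (Algebra.adjoin O ({π} : Set L))).colon
        (Subalgebra.toSubmodule S) := by
      rw [← hbS]; exact Ideal.mem_span_singleton.mpr dvd_rfl
    have h2 := Submodule.mem_colon.mp h x hx
    rwa [hAeq] at h2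
  -- bOL ∣ bS * g
  have hbOLdvd : bOL ∣ bS * g := by
    obtain ⟨a, b, hab⟩ := (hAmem _).mp (hbScolon _ hs₀S)
    rw [hs₀L] at hab
    have h : (bS*t) • (1:L) + (bS*g) • e₂ = a • (1:L) + (b*bOL) • e₂ := by
      rw [← smul_smul b bOL, ← smul_smul bS t, ← smul_smul bS g, ← hab]
      module
    obtain ⟨-, h2⟩ := huniq _ _ _ _ h
    exact ⟨b, by rw [h2]; ring⟩
  -- bOL = g * m' with bS ∣ m'
  obtain ⟨m', hm'⟩ := hgbOL
  have hm'colon : ∀ x ∈ S, m' • x ∈ A := by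
    intro x hx
    set xR : integralClosure O L := ⟨x, hSint x hx⟩ with hxRdef
    have hxI : c.repr xR 1 ∈ I := by
      refine ⟨xR, (hmemT' _).mpr hx, ?_⟩
      rw [Module.Basis.coord_apply]
    obtain ⟨w, hw⟩ := Ideal.mem_span_singleton.mp (hIg ▸ hxI)
    have hx2 : x = (c.repr xR 0) • (1:L) + (c.repr xR 1) • e₂ := hcoord xR
    rw [(hAmem _)]
    refine ⟨m' * c.repr xR 0, w, ?_⟩
    rw [hx2, hw, hm']
    rw [smul_add, smul_smul, smul_smul]
    have hco : m' * (g * w) = w * (g * m') := by ring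
    rw [hco, smul_smul]
  have hbSm' : bS ∣ m' := by
    have h : m' ∈ Ideal.span {bS} := by
      rw [hbS]
      rw [Submodule.mem_colon]
      intro x hx
      have := hm'colon x hx
      rwa [hAeq]
    exact Ideal.mem_span_singleton.mp h
  obtain ⟨k, hk⟩ := hbSm'
  -- k is a unit; g ≠ 0
  have hg0 : g ≠ 0 := fun h => hbOL0 (by rw [hm', h, zero_mul])
  have hk0 : bS * g * (k * 1) = bS * g * 1 → k * 1 = 1 := by
    intro h
    exact mul_left_cancel₀ (mul_ne_zero hbS0 hg0) h
  obtain ⟨w', hw'⟩ := hbOLdvd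
  have hkw' : k * w' = 1 := by
    have h : bS * g * (k * w') = bS * g * 1 := by
      rw [mul_one]
      calc bS * g * (k * w') = (g * (bS * k)) * w' := by ring
      _ = bOL * w' := by rw [← hk, ← hm']
      _ = bS * g := hw'.symm
    exact mul_left_cancel₀ (mul_ne_zero hbS0 hg0) h
  -- bOL = bS * (g * k)
  have hbOLeq : bOL = bS * (g * k) := by rw [hm', hk]; ring
  -- e₂' = (g*k) • e₂
  have hbSunit : IsUnit (algebraMap O L bS) := by
    rw [IsScalarTower.algebraMap_apply O E L]
    exact (algebraMap E L).isUnit_map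
      (isUnit_iff_ne_zero.mpr (fun h => hbS0 ((injective_iff_map_eq_zero _).mp
        (IsFractionRing.injective O E) bS h)))
  have he₂'e₂ : e₂' = (g*k) • e₂ := by
    have h : algebraMap O L bS * e₂' = algebraMap O L bS * ((g*k) • e₂) := by
      rw [he₂', hα, ← mul_assoc, ← map_mul, ← hbOLeq, he₂]
    exact hbSunit.mul_left_cancel h
  -- e₂' ∈ S
  have hge₂S : g • e₂ ∈ S := by
    have h : g • e₂ = (s₀ : L) - t • (1:L) := by rw [hs₀L]; ring
    rw [h]
    exact Subalgebra.sub_mem _ hs₀S (Subalgebra.smul_mem _ (Subalgebra.one_mem _) _)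
  have he₂'S : e₂' ∈ S := by
    rw [he₂'e₂, mul_comm, ← smul_smul]
    exact Subalgebra.smul_mem _ hge₂S _
  -- every element of S is a combination of 1 and e₂'
  have hSgen : ∀ x ∈ S, ∃ a b : O, x = a • (1:L) + b • e₂' := by
    intro x hx
    set xR : integralClosure O L := ⟨x, hSint x hx⟩ with hxRdef
    have hxI : c.repr xR 1 ∈ I := by
      refine ⟨xR, (hmemT' _).mpr hx, ?_⟩
      rw [Module.Basis.coord_apply]
    obtain ⟨w, hw⟩ := Ideal.mem_span_singleton.mp (hIg ▸ hxI)
    refine ⟨c.repr xR 0, w * w', ?_⟩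
    have hx2 : x = (c.repr xR 0) • (1:L) + (c.repr xR 1) • e₂ := hcoord xR
    rw [hx2, hw, he₂'e₂, smul_smul]
    have h : w * w' * (g * k) = g * w := by
      calc w * w' * (g * k) = (k * w') * (g * w) := by ring
      _ = g * w := by rw [hkw', one_mul]
    rw [h]
  -- linear independence of (1, e₂') over O
  have hpair' : ∀ a b : O, a • (1:L) + b • e₂' = 0 → a = 0 ∧ b = 0 := by
    intro a b h
    rw [he₂'e₂, smul_smul] at h
    obtain ⟨h1, h2⟩ := hpair _ _ h
    refine ⟨h1, ?_⟩
    have hgk : g * k ≠ 0 := fun hh => hbOL0 (by rw [hbOLeq, hh, mul_zero])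
    exact (mul_eq_zero.mp h2).resolve_right hgk
  -- build the basis
  set vv : Fin 2 → S := ![⟨1, Subalgebra.one_mem S⟩, ⟨e₂', he₂'S⟩] with hvvdef
  have hvvLI : LinearIndependent O vv := by
    apply LinearIndependent.of_comp (Subalgebra.val S).toLinearMap
    have h : ⇑(Subalgebra.val S).toLinearMap ∘ vv = ![(1:L), e₂'] := by
      funext i; fin_cases i <;> simp [hvvdef]
    rw [h]
    exact LinearIndependent.pair_iff.mpr hpair'
  have hvvsp : ⊤ ≤ Submodule.span O (Set.range vv) := by
    intro x _
    obtain ⟨a, b, hab⟩ := hSgen (x : L) x.2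
    have h : x = a • vv 0 + b • vv 1 := by
      apply Subtype.ext
      push_cast [hvvdef]
      exact hab
    have h2 : x ∈ Submodule.span O {vv 0, vv 1} :=
      Submodule.mem_span_pair.mpr ⟨a, b, h.symm⟩
    refine Submodule.span_mono ?_ h2
    rintro z (rfl | hz)
    · exact ⟨0, rfl⟩
    · simp only [Set.mem_singleton_iff] at hz; subst hz
      exact ⟨1, rfl⟩
  refine ⟨Module.Basis.mk hvvLI hvvsp, ?_, ?_⟩
  · rw [Module.Basis.mk_apply]
    simp [hvvdef]
  · rw [Module.Basis.mk_apply]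
    simp [hvvdef]
end

section
/- Let O be a Dedekind domain, L a quadratic étale algebra over its fraction field E, π ∈ L integral over O with π ∉ E, and let S ⊆ S' be two O-orders of L containing π, with conductors b_S = Ann_O(S/O[π]) and b_{S'} = Ann_O(S'/O[π]). Then S ⊆ S' if and only if b_{S'} ⊆ b_S (i.e. b_S divides b_{S'}). -/
open Polynomial FractionalIdeal

/-- Let `O` be a Dedekind domain, `L` a quadratic étale algebra over its fraction field
`E`, `π ∈ L` integral over `O` with `π ∉ E`, and let `S, S'` be two `O`-orders of `L`
containing `π`, with conductors `b_S = Ann_O(S/O[π])` and `b_{S'} = Ann_O(S'/O[π])`.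
Then `S ⊆ S'` if and only if `b_{S'} ⊆ b_S` (i.e. `b_S` divides `b_{S'}`). -/
theorem order_le_iff_conductor_dvd {v : Type} (O E L : Type v)
    [CommRing O] [IsDomain O] [IsDedekindDomain O]
    [Field E] [Algebra O E] [IsFractionRing O E]
    [CommRing L] [Algebra E L] [Algebra O L] [IsScalarTower O E L]
    [Algebra.Etale E L] (hdim : Module.finrank E L = 2)
    (π : L) (hint : IsIntegral O π) (hπ : π ∉ (algebraMap E L).range)
    (S S' : Subalgebra O L)
    (hπS : π ∈ S) (hfg : (Subalgebra.toSubmodule S).FG)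
    (hspan : Submodule.span E (S : Set L) = ⊤)
    (hπS' : π ∈ S') (hfg' : (Subalgebra.toSubmodule S').FG)
    (hspan' : Submodule.span E (S' : Set L) = ⊤) :
    S ≤ S' ↔
      (Subalgebra.toSubmodule (Algebra.adjoin O ({π} : Set L))).colon
          (Subalgebra.toSubmodule S') ≤
        (Subalgebra.toSubmodule (Algebra.adjoin O ({π} : Set L))).colon
          (Subalgebra.toSubmodule S) := by
  classical
  have hLnt : Nontrivial L :=
    Module.nontrivial_of_finrank_pos (R := E) (by rw [hdim]; norm_num)
  have hfd : FiniteDimensional E L :=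
    FiniteDimensional.of_finrank_pos (by rw [hdim]; norm_num)
  have hEL : Function.Injective (algebraMap E L) := (algebraMap E L).injective
  -- `![π, 1]` is a basis of `L` over `E`
  have hli : LinearIndependent E ![π, (1 : L)] := by
    rw [linearIndependent_fin2]
    refine ⟨by simp, fun a ha => ?_⟩
    simp only [Matrix.cons_val_one, Matrix.head_cons, Matrix.cons_val_zero] at ha
    exact hπ ⟨a, by rw [Algebra.algebraMap_eq_smul_one]; exact ha⟩
  set B : Module.Basis (Fin 2) E L :=
    basisOfLinearIndependentOfCardEqFinrank hli (by simp [hdim]) with hBdef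
  have hB0 : B 0 = π := by
    rw [hBdef, coe_basisOfLinearIndependentOfCardEqFinrank]; rfl
  have hB1 : B 1 = 1 := by
    rw [hBdef, coe_basisOfLinearIndependentOfCardEqFinrank]; rfl
  -- the two coordinate maps, as `O`-linear maps
  set cp : L →ₗ[O] E := (B.coord 0).restrictScalars O with hcpdef
  set c1 : L →ₗ[O] E := (B.coord 1).restrictScalars O with hc1def
  have hcoord : ∀ x : L, x = cp x • π + c1 x • (1 : L) := by
    intro x
    have h := B.sum_repr x
    rw [Fin.sum_univ_two, hB0, hB1] at h
    exact h.symm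
  have hval : ∀ a b : E, cp (a • π + b • (1 : L)) = a ∧ c1 (a • π + b • (1 : L)) = b := by
    intro a b
    constructor <;>
      simp [hcpdef, hc1def, Module.Basis.coord_apply, ← hB0, ← hB1, _root_.map_add,
        _root_.map_smul, Module.Basis.repr_self, Finsupp.single_apply]
  have hcpπ : cp π = 1 := by simpa using (hval 1 0).1
  have hcp1 : cp (1 : L) = 0 := by simpa using (hval 0 1).1
  have hc1π : c1 π = 0 := by simpa using (hval 1 0).2
  have hc11 : c1 (1 : L) = 1 := by simpa using (hval 0 1).2
  -- `π` satisfies a monic quadratic with coefficients in `O`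
  have hintE : IsIntegral E π := IsIntegral.of_finite E π
  set q : E[X] := minpoly E π with hqdef
  have hqmo : q.Monic := minpoly.monic hintE
  have hdq : q.natDegree = 2 := by
    have hch : Polynomial.aeval π (LinearMap.charpoly (Algebra.lmul E L π)) = 0 := by
      have h1 := LinearMap.aeval_self_charpoly (Algebra.lmul E L π)
      have h2 : Polynomial.aeval (Algebra.lmul E L π) (LinearMap.charpoly (Algebra.lmul E L π))
          = Algebra.lmul E L (Polynomial.aeval π (LinearMap.charpoly (Algebra.lmul E L π))) :=
        Polynomial.aeval_algHom_apply (Algebra.lmul E L) π _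
      have h3 := h2.symm.trans h1
      have h4 := congrArg (fun f : Module.End E L => f 1) h3
      simpa using h4
    have hdvd : q ∣ LinearMap.charpoly (Algebra.lmul E L π) := minpoly.dvd E π hch
    have hle : q.natDegree ≤ 2 := by
      have := Polynomial.natDegree_le_of_dvd hdvd
        (LinearMap.charpoly_monic (Algebra.lmul E L π)).ne_zero
      rwa [LinearMap.charpoly_natDegree, hdim] at this
    have hge : 2 ≤ q.natDegree := (minpoly.two_le_natDegree_iff hintE).mpr hπ
    omega
  -- descend the coefficients of `q` to `O`
  obtain ⟨p₀, hp₀m, hp₀⟩ := hint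
  have hq_dvd : q ∣ p₀.map (algebraMap O E) := by
    apply minpoly.dvd
    rw [Polynomial.aeval_map_algebraMap]
    rw [Polynomial.aeval_def]
    exact hp₀
  obtain ⟨g, hg⟩ := IsIntegrallyClosed.eq_map_mul_C_of_dvd (K := E) hp₀m hq_dvd
  have hgq : g.map (algebraMap O E) = q := by
    rw [← hg, hqmo.leadingCoeff, Polynomial.C_1, mul_one]
  obtain ⟨s, hs⟩ : ∃ s : O, algebraMap O E s = -q.coeff 0 :=
    ⟨-g.coeff 0, by rw [map_neg, ← hgq, Polynomial.coeff_map]⟩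
  obtain ⟨t, ht⟩ : ∃ t : O, algebraMap O E t = -q.coeff 1 :=
    ⟨-g.coeff 1, by rw [map_neg, ← hgq, Polynomial.coeff_map]⟩
  have h0 : q.coeff 0 • (1 : L) + q.coeff 1 • π + π * π = 0 := by
    have h0 := minpoly.aeval E π
    rw [← hqdef, Polynomial.aeval_eq_sum_range, hdq] at h0
    rw [Finset.sum_range_succ, Finset.sum_range_succ, Finset.sum_range_one] at h0
    have hc2 : q.coeff 2 = 1 := by
      have := hqmo.coeff_natDegree
      rwa [hdq] at this
    rw [hc2, one_smul, pow_zero, pow_one, pow_two] at h0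
    exact h0
  have h0' : algebraMap E L (q.coeff 0) + algebraMap E L (q.coeff 1) * π + π * π = 0 := by
    rw [Algebra.smul_def, Algebra.smul_def, mul_one] at h0
    exact h0
  have hππ' : π * π = algebraMap O L t * π + algebraMap O L s := by
    rw [IsScalarTower.algebraMap_apply O E L, IsScalarTower.algebraMap_apply O E L,
      hs, ht, map_neg, map_neg]
    linear_combination h0'
  set te : E := algebraMap O E t with htedef
  set se : E := algebraMap O E s with hsedef
  have hππE : π * π = te • π + se • (1 : L) := by
    rw [htedef, hsedef, algebraMap_smul, algebraMap_smul, Algebra.smul_def,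
      Algebra.smul_def, mul_one]
    exact hππ'
  -- `O[π] = O·π + O·1`
  set N : Submodule O L := Submodule.span O ({π, (1 : L)} : Set L) with hNdef
  have hN : Subalgebra.toSubmodule (Algebra.adjoin O ({π} : Set L)) = N := by
    apply le_antisymm
    · intro x hx
      have hx' : x ∈ Algebra.adjoin O ({π} : Set L) := hx
      clear hx
      induction hx' using Algebra.adjoin_induction with
      | mem z hz =>
        rw [Set.mem_singleton_iff] at hz
        subst hz
        exact Submodule.subset_span (by simp)
      | algebraMap r =>
        rw [Algebra.algebraMap_eq_smul_one]
        exact Submodule.smul_mem _ _ (Submodule.subset_span (by simp))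
      | add x y hxm hym ihx ihy => exact Submodule.add_mem _ ihx ihy
      | mul x y hxm hym ihx ihy =>
        obtain ⟨a, b, hab⟩ := Submodule.mem_span_pair.mp ihx
        obtain ⟨c, d, hcd⟩ := Submodule.mem_span_pair.mp ihy
        refine Submodule.mem_span_pair.mpr
          ⟨a * c * t + a * d + b * c, a * c * s + b * d, ?_⟩
        rw [← hab, ← hcd]
        simp only [Algebra.smul_def, _root_.map_add, _root_.map_mul, mul_one]
        linear_combination (-(algebraMap O L a * algebraMap O L c)) * hππ'
    · rw [hNdef, Submodule.span_le]
      rintro z hz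
      simp only [Set.mem_insert_iff, Set.mem_singleton_iff] at hz
      rcases hz with rfl | rfl
      · exact Algebra.subset_adjoin rfl
      · exact Subalgebra.one_mem _
  -- membership in `N` in terms of coordinates
  have hmemN : ∀ z : L, z ∈ N ↔
      (∃ r : O, algebraMap O E r = cp z) ∧ (∃ r : O, algebraMap O E r = c1 z) := by
    intro z
    constructor
    · intro hz
      obtain ⟨a, b, hab⟩ := Submodule.mem_span_pair.mp hz
      have hz' : z = (algebraMap O E a) • π + (algebraMap O E b) • (1 : L) := by
        rw [← hab, algebraMap_smul, algebraMap_smul]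
      rw [hz']
      exact ⟨⟨a, ((hval _ _).1).symm⟩, ⟨b, ((hval _ _).2).symm⟩⟩
    · rintro ⟨⟨r, hr⟩, ⟨u, hu⟩⟩
      have hz' : z = r • π + u • (1 : L) := by
        conv_lhs => rw [hcoord z]
        rw [← hr, ← hu, algebraMap_smul, algebraMap_smul]
      rw [hz']
      exact Submodule.add_mem _
        (Submodule.smul_mem _ _ (Submodule.subset_span (by simp)))
        (Submodule.smul_mem _ _ (Submodule.subset_span (by simp)))
  -- the constant coordinate of an element of an order lies in the `π`-coordinate ideal
  have hJT : ∀ T : Subalgebra O L, π ∈ T → ∀ x ∈ T,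
      c1 x ∈ Submodule.map cp (Subalgebra.toSubmodule T) := by
    intro T hπT x hx
    have hxπ : x * π ∈ T := T.mul_mem hx hπT
    have e1 : x * π = (cp x * te + c1 x) • π + (cp x * se) • (1 : L) := by
      conv_lhs => rw [hcoord x]
      rw [add_mul, smul_mul_assoc, smul_mul_assoc, one_mul, hππE, smul_add,
        smul_smul, smul_smul]
      module
    have h1 : cp (x * π) = cp x * te + c1 x := by
      rw [e1]; exact (hval _ _).1
    have h2 : c1 x = cp (x * π) - t • cp x := by
      rw [h1, htedef]
      rw [Algebra.smul_def]
      ring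
    rw [h2]
    exact Submodule.sub_mem _ ⟨x * π, hxπ, rfl⟩
      (Submodule.smul_mem _ _ ⟨x, hx, rfl⟩)
  -- the fractional ideals of `π`-coordinates
  set IS : Submodule O E := Submodule.map cp (Subalgebra.toSubmodule S) with hISdef
  set IS' : Submodule O E := Submodule.map cp (Subalgebra.toSubmodule S') with hIS'def
  set FIS : FractionalIdeal (nonZeroDivisors O) E :=
    ⟨IS, FractionalIdeal.isFractional_of_fg (hfg.map _)⟩ with hFISdef
  set FIS' : FractionalIdeal (nonZeroDivisors O) E :=
    ⟨IS', FractionalIdeal.isFractional_of_fg (hfg'.map _)⟩ with hFIS'def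
  have hmemFIS : ∀ x : E, x ∈ FIS ↔ x ∈ IS := fun x => Iff.rfl
  have hmemFIS' : ∀ x : E, x ∈ FIS' ↔ x ∈ IS' := fun x => Iff.rfl
  have h1S : (1 : E) ∈ FIS := by
    rw [hmemFIS]
    exact ⟨π, hπS, hcpπ⟩
  have h1S' : (1 : E) ∈ FIS' := by
    rw [hmemFIS']
    exact ⟨π, hπS', hcpπ⟩
  have hne : FIS ≠ 0 := by
    intro h
    rw [h] at h1S
    simp only [FractionalIdeal.mem_zero_iff] at h1S
    exact one_ne_zero h1S
  have hne' : FIS' ≠ 0 := by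
    intro h
    rw [h] at h1S'
    simp only [FractionalIdeal.mem_zero_iff] at h1S'
    exact one_ne_zero h1S'
  constructor
  · intro hSS' r hr
    rw [Submodule.mem_colon] at hr ⊢
    exact fun z hz => hr z (hSS' hz)
  · intro hb
    -- the dual inclusion
    have hdual : (1 : FractionalIdeal (nonZeroDivisors O) E) / FIS' ≤ 1 / FIS := by
      intro x hx
      have hx' := (FractionalIdeal.mem_div_iff_of_ne_zero hne').mp hx
      have hx1 : x ∈ (1 : FractionalIdeal (nonZeroDivisors O) E) := by
        have := hx' 1 h1S'
        simpa using this
      obtain ⟨r, hr⟩ := (FractionalIdeal.mem_one_iff _).mp hx1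
      have hrS' : r ∈ (Subalgebra.toSubmodule (Algebra.adjoin O ({π} : Set L))).colon
          (Subalgebra.toSubmodule S') := by
        rw [Submodule.mem_colon]
        intro z hz
        rw [hN, hmemN]
        constructor
        · have hcz : cp z ∈ IS' := ⟨z, hz, rfl⟩
          have := hx' (cp z) hcz
          obtain ⟨u, hu⟩ := (FractionalIdeal.mem_one_iff _).mp this
          refine ⟨u, ?_⟩
          rw [hu, map_smul, ← hr]
          rw [Algebra.smul_def]
        · have hcz : c1 z ∈ IS' := hJT S' hπS' z hz
          have := hx' (c1 z) hcz
          obtain ⟨u, hu⟩ := (FractionalIdeal.mem_one_iff _).mp this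
          refine ⟨u, ?_⟩
          rw [hu, map_smul, ← hr]
          rw [Algebra.smul_def]
      have hrS := hb hrS'
      refine (FractionalIdeal.mem_div_iff_of_ne_zero hne).mpr ?_
      rintro y ⟨z, hz, rfl⟩
      have hmem := Submodule.mem_colon.mp hrS z hz
      rw [hN, hmemN] at hmem
      obtain ⟨u, hu⟩ := hmem.1
      refine (FractionalIdeal.mem_one_iff _).mpr ⟨u, ?_⟩
      rw [hu, map_smul, ← hr, Algebra.smul_def]
    -- invert twice, using the Dedekind property
    have hd0 : (1 : FractionalIdeal (nonZeroDivisors O) E) / FIS ≠ 0 := by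
      rw [one_div]; exact inv_ne_zero hne
    have hd0' : (1 : FractionalIdeal (nonZeroDivisors O) E) / FIS' ≠ 0 := by
      rw [one_div]; exact inv_ne_zero hne'
    have hFI : FIS ≤ FIS' := by
      rw [← one_div_one_div FIS, ← one_div_one_div FIS']
      intro x hx
      refine (FractionalIdeal.mem_div_iff_of_ne_zero hd0').mpr ?_
      intro y hy
      exact (FractionalIdeal.mem_div_iff_of_ne_zero hd0).mp hx y (hdual hy)
    have hIle : IS ≤ IS' := hFI
    -- conclude
    intro x hx
    have ha : cp x ∈ IS' := hIle ⟨x, hx, rfl⟩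
    obtain ⟨y, hyS', hy⟩ := ha
    have hsub : x - y = algebraMap E L (c1 x - c1 y) := by
      conv_lhs => rw [hcoord x, hcoord y]
      rw [hy, Algebra.algebraMap_eq_smul_one, sub_smul]
      module
    have hintx : IsIntegral O x := IsIntegral.of_mem_of_fg S hfg x hx
    have hinty : IsIntegral O y := IsIntegral.of_mem_of_fg S' hfg' y hyS'
    have hintd : IsIntegral O (x - y) := hintx.sub hinty
    rw [hsub] at hintd
    have hintc : IsIntegral O (c1 x - c1 y) := IsIntegral.tower_bot hEL hintd
    obtain ⟨r, hr⟩ := IsIntegrallyClosed.isIntegral_iff.mp hintc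
    have hx' : x = y + algebraMap O L r := by
      have : algebraMap O L r = algebraMap E L (c1 x - c1 y) := by
        rw [IsScalarTower.algebraMap_apply O E L, hr]
      rw [this, ← hsub]
      ring
    rw [hx']
    exact S'.add_mem hyS' (S'.algebraMap_mem r)
end

section
/- Let E be a number field of class number one, L = E[π] a quadratic étale E-algebra with π integral over O_E with minimal polynomial x² − ax + s over E (a, s ∈ O_E), and let S ⊆ L be an O_E-order containing π with conductor generated by b ∈ O_E, and u ∈ O_E with 2u − a ∈ (b), u² − au + s ∈ (b²). Then the matrix σ = [[u, −(u² − au + s)/b], [b, a − u]] has entries in O_E, has characteristic polynomial x² − ax + s, and represents the multiplication-by-π map on S in the O_E-basis (1, (π − u)/b). -/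
open NumberField Polynomial

private lemma quad_coords {R A : Type*} [CommRing R] [Nontrivial R] [CommRing A] [Algebra R A]
    (π : A) (a s : R) (hquad : π ^ 2 - algebraMap R A a * π + algebraMap R A s = 0)
    {x : A} (hx : x ∈ Algebra.adjoin R ({π} : Set A)) :
    ∃ c₀ c₁ : R, x = algebraMap R A c₀ + algebraMap R A c₁ * π := by
  rw [Algebra.adjoin_singleton_eq_range_aeval] at hx
  obtain ⟨p, hp⟩ := hx
  set q : R[X] := X ^ 2 - (C a * X + C (-s)) with hqdef
  have hd : (C a * X + C (-s)).degree ≤ 1 := degree_linear_le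
  have h12 : (1 : WithBot ℕ) < ((2 : ℕ) : WithBot ℕ) := by exact_mod_cast (by norm_num : (1:ℕ) < 2)
  have hqm : q.Monic := monic_X_pow_sub (lt_of_le_of_lt hd h12)
  have hq0 : aeval π q = 0 := by
    simp only [hqdef, map_sub, map_add, map_mul, map_pow, aeval_X, aeval_C, map_neg]
    linear_combination hquad
  have hqd2 : q.degree = 2 := by
    have hlt : (C a * X + C (-s)).degree < (X ^ 2 : R[X]).degree := by
      rw [degree_X_pow]
      exact lt_of_le_of_lt hd h12
    rw [hqdef, degree_sub_eq_left_of_degree_lt hlt, degree_X_pow]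
    norm_cast
  have hdeg : (p %ₘ q).degree ≤ 1 := by
    have h := degree_modByMonic_lt p hqm
    rw [hqd2] at h
    exact Order.le_of_lt_succ (by rwa [(by rfl : Order.succ (1:WithBot ℕ) = 2)])
  refine ⟨(p %ₘ q).coeff 0, (p %ₘ q).coeff 1, ?_⟩
  have hval : aeval π (p %ₘ q) = x := by
    conv_rhs => rw [← hp]
    conv_rhs => rw [← modByMonic_add_div p q]
    simp [hq0]
  conv_lhs => rw [← hval, eq_X_add_C_of_degree_le_one hdeg]
  simp only [map_add, map_mul, aeval_X, aeval_C]
  ring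


set_option maxHeartbeats 1000000 in
/-- Let `E` be a number field of class number one with ring of integers `O`,
`L = E[π]` a quadratic étale `E`-algebra with `π` integral over `O`, `π ∉ E`, and
minimal polynomial `x² − ax + s` (`a, s ∈ O`).  Let `S ⊆ L` be an `O`-order containing
`π` with conductor generated by `b`, and `u ∈ O` with `2u − a ∈ (b)` and
`u² − au + s ∈ (b²)`.  Then, with `e₂ = (π − u)/b`, the pair `(1, e₂)` is an `O`-basis
of `S`, the matrix `σ = [[u, −(u²−au+s)/b],[b, a−u]]` has entries in `O`, has
characteristic polynomial `x² − ax + s`, and represents multiplication by `π` on `S`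
in this basis. -/
theorem integral_frobenius_matrix_represents {w : Type} (E L : Type w)
    [Field E] [NumberField E] (hcl : NumberField.classNumber E = 1)
    [CommRing L] [Nontrivial L] [Algebra E L]
    [Algebra (𝓞 E) L] [IsScalarTower (𝓞 E) E L]
    [Algebra.Etale E L] (hdim : Module.finrank E L = 2)
    (π : L) (a s : 𝓞 E)
    (hquad : π ^ 2 - algebraMap (𝓞 E) L a * π + algebraMap (𝓞 E) L s = 0)
    (hπ : π ∉ (algebraMap E L).range)
    (hgen : Algebra.adjoin E ({π} : Set L) = ⊤)
    (S : Subalgebra (𝓞 E) L) (hπS : π ∈ S)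
    (hfg : (Subalgebra.toSubmodule S).FG)
    (hspan : Submodule.span E (S : Set L) = ⊤)
    (b : 𝓞 E)
    (hb : Ideal.span {b} =
      (Subalgebra.toSubmodule (Algebra.adjoin (𝓞 E) ({π} : Set L))).colon
        (Subalgebra.toSubmodule S))
    (u : 𝓞 E) (hu1 : 2 * u - a ∈ Ideal.span {b})
    (hu2 : u ^ 2 - a * u + s ∈ Ideal.span {b ^ 2})
    (e₂ : L) (he₂ : algebraMap (𝓞 E) L b * e₂ = π - algebraMap (𝓞 E) L u) :
    ∃ v : 𝓞 E,
      b * v = u ^ 2 - a * u + s ∧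
      (∃ d : Module.Basis (Fin 2) (𝓞 E) S, (d 0 : L) = 1 ∧ (d 1 : L) = e₂) ∧
      Matrix.charpoly !![u, -v; b, a - u] = X ^ 2 - C a * X + C s ∧
      π * 1 = algebraMap (𝓞 E) L u * 1 + algebraMap (𝓞 E) L b * e₂ ∧
      π * e₂ = algebraMap (𝓞 E) L (-v) * 1 + algebraMap (𝓞 E) L (a - u) * e₂ := by
  classical
  haveI hPIR : IsPrincipalIdealRing (𝓞 E) := NumberField.classNumber_eq_one_iff.mp hcl
  set f : 𝓞 E →+* L := algebraMap (𝓞 E) L with hfdef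
  have hfact : ∀ c : 𝓞 E, f c = algebraMap E L (algebraMap (𝓞 E) E c) :=
    fun c => IsScalarTower.algebraMap_apply (𝓞 E) E L c
  have hgE : Function.Injective (algebraMap E L) := (algebraMap E L).injective
  have hOE : Function.Injective (algebraMap (𝓞 E) E) := IsFractionRing.injective (𝓞 E) E
  -- b ≠ 0
  have hb0 : b ≠ 0 := by
    rintro rfl
    apply hπ
    refine ⟨algebraMap (𝓞 E) E u, ?_⟩
    rw [← hfact]
    rw [map_zero, zero_mul] at he₂
    linear_combination he₂
  have hbE0 : algebraMap (𝓞 E) E b ≠ 0 := fun hc => hb0 (hOE (by rw [hc, map_zero]))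
  have hcancel : ∀ x y : L, f b * x = f b * y → x = y := by
    intro x y h
    have key : ∀ z : L, algebraMap E L ((algebraMap (𝓞 E) E b)⁻¹) * (f b * z) = z := by
      intro z
      rw [hfact b, ← mul_assoc, ← map_mul, inv_mul_cancel₀ hbE0, map_one, one_mul]
    rw [← key x, h, key y]
  -- uniqueness of coordinates in the basis (1, π)
  have huniqE : ∀ e₀ e₁ d₀ d₁ : E, algebraMap E L e₀ + algebraMap E L e₁ * π
      = algebraMap E L d₀ + algebraMap E L d₁ * π → e₀ = d₀ ∧ e₁ = d₁ := by
    intro e₀ e₁ d₀ d₁ h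
    have h1 : e₁ = d₁ := by
      by_contra hne
      have hd : d₁ - e₁ ≠ 0 := sub_ne_zero.mpr fun hc => hne hc.symm
      apply hπ
      refine ⟨(d₁ - e₁)⁻¹ * (e₀ - d₀), ?_⟩
      have hmul : algebraMap E L (d₁ - e₁) * π = algebraMap E L (e₀ - d₀) := by
        rw [map_sub, map_sub]; linear_combination -h
      rw [map_mul, ← hmul, ← mul_assoc, ← map_mul, inv_mul_cancel₀ hd, map_one, one_mul]
    subst h1
    exact ⟨hgE (add_right_cancel h), rfl⟩
  have huniqO : ∀ c₀ c₁ d₀ d₁ : 𝓞 E, f c₀ + f c₁ * π = f d₀ + f d₁ * π →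
      c₀ = d₀ ∧ c₁ = d₁ := by
    intro c₀ c₁ d₀ d₁ h
    rw [hfact c₀, hfact c₁, hfact d₀, hfact d₁] at h
    obtain ⟨h0, h1⟩ := huniqE _ _ _ _ h
    exact ⟨hOE h0, hOE h1⟩
  have hmemadj : ∀ m n : 𝓞 E, f m + f n * π ∈ Algebra.adjoin (𝓞 E) ({π} : Set L) :=
    fun m n => add_mem (Subalgebra.algebraMap_mem _ m)
      (mul_mem (Subalgebra.algebraMap_mem _ n) (Algebra.subset_adjoin rfl))
  have hrep : ∀ x, x ∈ S → ∃ m n : 𝓞 E, f b * x = f m + f n * π := by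
    intro x hx
    have hbcol : b ∈ (Subalgebra.toSubmodule (Algebra.adjoin (𝓞 E) ({π} : Set L))).colon
        (Subalgebra.toSubmodule S) := hb ▸ Ideal.mem_span_singleton_self b
    have hmem := Submodule.mem_colon.mp hbcol x hx
    rw [Algebra.smul_def] at hmem
    exact quad_coords π a s hquad hmem
  have hcol2 : ∀ c : 𝓞 E, (∀ x, x ∈ S → ∃ m n : 𝓞 E, f c * x = f m + f n * π) → b ∣ c := by
    intro c hc
    rw [← Ideal.mem_span_singleton, hb]
    refine Submodule.mem_colon.mpr fun p hp => ?_
    obtain ⟨m, n, hmn⟩ := hc p hp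
    rw [Algebra.smul_def, hmn]
    exact hmemadj m n
  -- the ideal of second coordinates
  let N : Ideal (𝓞 E) :=
    { carrier := {n | ∃ m x, x ∈ S ∧ f b * x = f m + f n * π}
      add_mem' := by
        rintro n₁ n₂ ⟨m₁, x₁, hx₁, h₁⟩ ⟨m₂, x₂, hx₂, h₂⟩
        refine ⟨m₁ + m₂, x₁ + x₂, add_mem hx₁ hx₂, ?_⟩
        simp only [map_add]
        linear_combination h₁ + h₂
      zero_mem' := ⟨0, 0, zero_mem _, by simp⟩
      smul_mem' := by
        rintro c n ⟨m, x, hx, hmn⟩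
        refine ⟨c * m, c • x, S.smul_mem hx c, ?_⟩
        rw [Algebra.smul_def]
        simp only [smul_eq_mul, map_mul]
        linear_combination f c * hmn }
  have hNmem : ∀ n : 𝓞 E, n ∈ N ↔ ∃ m x, x ∈ S ∧ f b * x = f m + f n * π := fun _ => Iff.rfl
  have hbN : b ∈ N := ⟨0, π, hπS, by rw [map_zero]; ring⟩
  have hmN : ∀ m n x, x ∈ S → f b * x = f m + f n * π → m ∈ N ∧ n ∈ N := by
    intro m n x hx hmn
    have hnN : n ∈ N := ⟨m, x, hx, hmn⟩
    obtain ⟨m', n', h'⟩ := hrep (x * π) (mul_mem hx hπS)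
    have hcalc : f b * (x * π) = f (-(s*n)) + f (m + a*n) * π := by
      have hh : f b * (x * π) = (f m + f n * π) * π := by rw [← hmn]; ring
      rw [hh]
      simp only [map_add, map_mul, map_neg]
      linear_combination f n * hquad
    obtain ⟨-, hn'⟩ := huniqO _ _ _ _ (h'.symm.trans hcalc)
    have hn'N : n' ∈ N := ⟨m', x * π, mul_mem hx hπS, h'⟩
    have hmrw : m = n' - a * n := by rw [hn']; ring
    rw [hmrw]
    exact ⟨sub_mem hn'N (Ideal.mul_mem_left N a hnN), hnN⟩
  obtain ⟨gN, hgN⟩ := (IsPrincipalIdealRing.principal N).principal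
  have hNdvd : ∀ n ∈ N, gN ∣ n := by
    intro n hn
    rwa [hgN, Ideal.submodule_span_eq, Ideal.mem_span_singleton] at hn
  have h1N : (1 : 𝓞 E) ∈ N := by
    obtain ⟨h1, hbgh⟩ := hNdvd b hbN
    have hbdh : b ∣ h1 := by
      apply hcol2
      intro x hx
      obtain ⟨m, n, hmn⟩ := hrep x hx
      obtain ⟨m', hm'⟩ := hNdvd m (hmN m n x hx hmn).1
      obtain ⟨n', hn'⟩ := hNdvd n (hmN m n x hx hmn).2
      refine ⟨m', n', hcancel _ _ ?_⟩
      rw [hm', hn', hbgh] at hmn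
      rw [hbgh]
      simp only [map_mul] at hmn ⊢
      linear_combination f h1 * hmn
    obtain ⟨k, hk⟩ := hbdh
    have hgNone : gN ∣ 1 := by
      refine ⟨k, mul_left_cancel₀ hb0 ?_⟩
      linear_combination hbgh + gN * hk
    rw [hgN, Ideal.submodule_span_eq, Ideal.mem_span_singleton]
    exact hgNone
  obtain ⟨m₀, x₀, hx₀, hx₀eq⟩ := (hNmem 1).mp h1N
  rw [map_one, one_mul] at hx₀eq
  -- the ideal of "A = m + u n" values, and b ∣ A
  let J : Ideal (𝓞 E) :=
    { carrier := {A | ∃ m n x, x ∈ S ∧ f b * x = f m + f n * π ∧ A = m + u * n}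
      add_mem' := by
        rintro A₁ A₂ ⟨m₁, n₁, x₁, hx₁, h₁, rfl⟩ ⟨m₂, n₂, x₂, hx₂, h₂, rfl⟩
        refine ⟨m₁ + m₂, n₁ + n₂, x₁ + x₂, add_mem hx₁ hx₂, ?_, by ring⟩
        simp only [map_add]
        linear_combination h₁ + h₂
      zero_mem' := ⟨0, 0, 0, zero_mem _, by simp, by ring⟩
      smul_mem' := by
        rintro c A ⟨m, n, x, hx, hmn, rfl⟩
        refine ⟨c * m, c * n, c • x, S.smul_mem hx c, ?_, by simp only [smul_eq_mul]; ring⟩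
        rw [Algebra.smul_def]
        simp only [map_mul]
        linear_combination f c * hmn }
  have hJmem : ∀ A : 𝓞 E, A ∈ J ↔ ∃ m n x, x ∈ S ∧ f b * x = f m + f n * π ∧ A = m + u * n :=
    fun _ => Iff.rfl
  have hbJ : b ∈ J := ⟨b, 0, 1, one_mem _, by simp, by ring⟩
  obtain ⟨wq, hwq⟩ := Ideal.mem_span_singleton.mp hu2
  obtain ⟨gJ, hgJ⟩ := (IsPrincipalIdealRing.principal J).principal
  have hJdvd : ∀ A ∈ J, gJ ∣ A := by
    intro A hA
    rwa [hgJ, Ideal.submodule_span_eq, Ideal.mem_span_singleton] at hA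
  have hgJJ : gJ ∈ J := by
    rw [hgJ, Ideal.submodule_span_eq]
    exact Ideal.mem_span_singleton_self gJ
  obtain ⟨l, hbl⟩ := hJdvd b hbJ
  have hgJ0 : gJ ≠ 0 := by rintro rfl; rw [zero_mul] at hbl; exact hb0 hbl
  obtain ⟨m, n, x, hx, hmn, hA⟩ := (hJmem gJ).mp hgJJ
  obtain ⟨m₃, n₃, h₃⟩ := hrep (x * x) (mul_mem hx hx)
  have hsq : f b * (f b * (x * x)) = f (m^2 - s*n^2) + f (2*m*n + a*n^2) * π := by
    have hh : f b * (f b * (x * x)) = (f m + f n * π) * (f m + f n * π) := by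
      rw [← hmn]; ring
    rw [hh]
    simp only [map_add, map_sub, map_mul, map_pow, map_ofNat]
    linear_combination (f n)^2 * hquad
  have hsq2 : f (b*m₃) + f (b*n₃) * π = f (m^2 - s*n^2) + f (2*m*n + a*n^2) * π := by
    rw [← hsq, h₃]
    simp only [map_mul]
    ring
  obtain ⟨hbm₃, hbn₃⟩ := huniqO _ _ _ _ hsq2
  obtain ⟨k₃, hk₃⟩ := hJdvd (m₃ + u*n₃) ⟨m₃, n₃, x*x, mul_mem hx hx, h₃, rfl⟩
  have he1 : gJ^2 = b*m₃ + u*(b*n₃) + n^2*(u^2 - a*u + s) := by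
    linear_combination (gJ + m + u*n)*hA - hbm₃ - u*hbn₃
  have he3 : gJ * gJ = gJ * (b*k₃ + n^2*l*b*wq) := by
    linear_combination he1 + b*hk₃ + n^2*hwq + n^2*b*wq*hbl
  have hbgJ : b ∣ gJ := ⟨k₃ + n^2*l*wq, by linear_combination mul_left_cancel₀ hgJ0 he3⟩
  have hbA : ∀ m' n' x', x' ∈ S → f b * x' = f m' + f n' * π → b ∣ m' + u * n' :=
    fun m' n' x' hx' h' => hbgJ.trans (hJdvd _ ⟨m', n', x', hx', h', rfl⟩)
  -- e₂ belongs to S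
  obtain ⟨c₀, hc₀⟩ := hbA m₀ 1 x₀ hx₀ (by rw [map_one, one_mul]; exact hx₀eq)
  have he₂eq : e₂ = x₀ - f c₀ := by
    apply hcancel
    rw [he₂]
    have hbc : f m₀ + f u * f 1 = f b * f c₀ := by
      have := congrArg f hc₀
      simpa only [map_add, map_mul] using this
    rw [map_one] at hbc
    linear_combination -hx₀eq - hbc
  have he₂S : e₂ ∈ S := by
    rw [he₂eq]
    exact sub_mem hx₀ (S.algebraMap_mem c₀)
  -- every element of S is an O-combination of 1 and e₂
  have hdecomp : ∀ y, y ∈ S → ∃ c d : 𝓞 E, y = f c + f d * e₂ := by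
    intro y hy
    obtain ⟨m', n', hmn'⟩ := hrep y hy
    obtain ⟨c, hc⟩ := hbA m' n' y hy hmn'
    refine ⟨c, n', hcancel _ _ ?_⟩
    have hcm : f m' + f u * f n' = f b * f c := by
      have := congrArg f hc
      simpa only [map_add, map_mul] using this
    rw [hmn']
    linear_combination (-(f n')) * he₂ + hcm
  -- the basis
  let vb : Fin 2 → S := ![⟨1, one_mem S⟩, ⟨e₂, he₂S⟩]
  have hli : LinearIndependent (𝓞 E) vb := by
    rw [Fintype.linearIndependent_iff]
    intro c hc
    have h0 : c 0 • vb 0 + c 1 • vb 1 = 0 := by rwa [Fin.sum_univ_two] at hc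
    have h1 : c 0 • (⟨1, one_mem S⟩ : S) + c 1 • (⟨e₂, he₂S⟩ : S) = 0 := by
      simpa only [vb, Matrix.cons_val_zero, Matrix.cons_val_one, Matrix.head_cons] using h0
    have hcL : (c 0) • (1 : L) + (c 1) • e₂ = 0 := congrArg Subtype.val h1
    rw [Algebra.smul_def, Algebra.smul_def] at hcL
    have h2 : f (c 0 * b - c 1 * u) + f (c 1) * π = f 0 + f 0 * π := by
      simp only [map_sub, map_mul, map_zero]
      linear_combination f b * hcL - f (c 1) * he₂
    obtain ⟨hc0, hc1⟩ := huniqO _ _ _ _ h2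
    intro i
    fin_cases i
    · have hcb : c 0 * b = 0 := by rw [hc1] at hc0; linear_combination hc0
      rcases mul_eq_zero.mp hcb with h | h
      · exact h
      · exact absurd h hb0
    · exact hc1
  have hsp : ⊤ ≤ Submodule.span (𝓞 E) (Set.range vb) := by
    rintro ⟨y, hy⟩ -
    obtain ⟨c, d, hcd⟩ := hdecomp y hy
    have hyeq : (⟨y, hy⟩ : S) = c • vb 0 + d • vb 1 := by
      apply Subtype.ext
      show y = c • (1 : L) + d • e₂
      rw [Algebra.smul_def, Algebra.smul_def, hcd]
      ring
    rw [hyeq]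
    exact add_mem (Submodule.smul_mem _ _ (Submodule.subset_span ⟨0, rfl⟩))
      (Submodule.smul_mem _ _ (Submodule.subset_span ⟨1, rfl⟩))
  let dB : Module.Basis (Fin 2) (𝓞 E) S := Module.Basis.mk hli hsp
  have hveq : b * (b * wq) = u^2 - a*u + s := by linear_combination -hwq
  refine ⟨b * wq, hveq, ⟨dB, ?_, ?_⟩, ?_, ?_, ?_⟩
  · exact congrArg Subtype.val (Module.Basis.mk_apply hli hsp 0)
  · exact congrArg Subtype.val (Module.Basis.mk_apply hli hsp 1)
  · -- charpoly
    have hO2 : u * (a - u) + b * (b * wq) = s := by linear_combination -hwq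
    have hC2 := congrArg (Polynomial.C (R := 𝓞 E)) hO2
    simp only [map_add, map_mul, map_sub] at hC2
    rw [Matrix.charpoly, Matrix.det_fin_two]
    simp only [Matrix.of_apply, Matrix.charmatrix_apply_eq, Matrix.charmatrix_apply_ne _ _ _ (by decide : (0 : Fin 2) ≠ 1),
      Matrix.charmatrix_apply_ne _ _ _ (by decide : (1 : Fin 2) ≠ 0),
      Matrix.cons_val', Matrix.cons_val_zero, Matrix.cons_val_one, Matrix.head_cons,
      Matrix.empty_val', Matrix.cons_val_fin_one, Matrix.head_fin_const,
      map_sub, map_neg, map_mul]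
    linear_combination hC2
  · rw [he₂]; ring
  · apply hcancel
    have hvm := congrArg f hveq
    simp only [map_mul, map_sub, map_add, map_pow] at hvm
    simp only [map_neg, map_sub, map_mul]
    linear_combination (π - f a + f u) * he₂ + hquad + hvm
end
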